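/- arXiv:2205.08742 — 4 statements merged into one kernel-verified Lean document; each statement's English description precedes it below -/
import Mathlib

section
/- Isodiametric inequality: for every bounded Borel set C ⊆ ℝ^j, λ_j(C) ≤ (ω_j / 2^j) · (diam C)^j, where λ_j is Lebesgue measure, ω_j is the volume of the unit ball in ℝ^j, and diam C = sup_{x,y ∈ C} ‖x - y‖ is the Euclidean diameter of C. -/
open MeasureTheory

open Function Set
open scoped ENNReal NNReal

section IsodiametricAux

variable {j : ℕ}

noncomputable def fib (A : Set (Fin j → ℝ)) (i : Fin j) (x : Fin j → ℝ) : Set ℝ :=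
  {t | Function.update x i t ∈ A}

noncomputable def st (i : Fin j) (A : Set (Fin j → ℝ)) : Set (Fin j → ℝ) :=
  {x | 2 * ENNReal.ofReal (abs (x i)) < volume (fib A i x)}

noncomputable def toE (x : Fin j → ℝ) : EuclideanSpace ℝ (Fin j) :=
  (WithLp.equiv 2 (Fin j → ℝ)).symm x

lemma coord_le_dist (x y : Fin j → ℝ) (k : Fin j) :
    dist (x k) (y k) ≤ dist (toE x) (toE y) := by
  rw [EuclideanSpace.dist_eq]
  rw [show dist (x k) (y k) = Real.sqrt (dist (x k) (y k)^2) from (Real.sqrt_sq dist_nonneg).symm]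
  apply Real.sqrt_le_sqrt
  exact Finset.single_le_sum (f := fun l => dist (x l) (y l)^2)
    (fun l _ => sq_nonneg _) (Finset.mem_univ k)

lemma dist_le_of_coord {x y p q : Fin j → ℝ} (i : Fin j)
    (hcoord : ∀ k, k ≠ i → x k = p k ∧ y k = q k)
    (hi : |x i - y i| ≤ |p i - q i|) :
    dist (toE x) (toE y) ≤ dist (toE p) (toE q) := by
  rw [EuclideanSpace.dist_eq, EuclideanSpace.dist_eq]
  apply Real.sqrt_le_sqrt
  apply Finset.sum_le_sum
  intro k _
  rcases eq_or_ne k i with rfl | hk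
  · show dist (x k) (y k)^2 ≤ dist (p k) (q k)^2
    simp only [Real.dist_eq]
    calc |x k - y k| ^ 2 = (x k - y k)^2 := sq_abs _
    _ ≤ (p k - q k)^2 := by
        have h2 := pow_le_pow_left₀ (abs_nonneg _) hi 2
        rwa [sq_abs, sq_abs] at h2
    _ = |p k - q k|^2 := (sq_abs _).symm
  · show dist (x k) (y k)^2 ≤ dist (p k) (q k)^2
    rw [(hcoord k hk).1, (hcoord k hk).2]

-- closure helper
lemma iso_mem_closure_image {A : Set (Fin j → ℝ)} {i : Fin j} {x : Fin j → ℝ} {t : ℝ}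
    (ht : t ∈ closure (fib A i x)) : toE (Function.update x i t) ∈ closure (toE '' A) := by
  have hcont : Continuous fun s : ℝ => toE (Function.update x i s) :=
    (PiLp.continuous_toLp 2 (fun _ : Fin j => ℝ)).comp
      (continuous_const.update i continuous_id)
  have hmaps : Set.MapsTo (fun s : ℝ => toE (Function.update x i s)) (fib A i x) (toE '' A) :=
    fun s hs => Set.mem_image_of_mem _ hs
  exact hmaps.closure hcont ht

lemma fiber_props {A : Set (Fin j → ℝ)} {i : Fin j} {x : Fin j → ℝ}
    (hx : x ∈ st i A) (hd : EMetric.diam (toE '' A) ≠ ⊤) :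
    (fib A i x).Nonempty ∧ BddBelow (fib A i x) ∧ BddAbove (fib A i x) ∧
      2 * |x i| < (volume (fib A i x)).toReal ∧
      (volume (fib A i x)).toReal ≤ sSup (fib A i x) - sInf (fib A i x) := by
  set X := fib A i x with hX
  set dr := (EMetric.diam (toE '' A)).toReal with hdr
  have hx' : 2 * ENNReal.ofReal |x i| < volume X := hx
  have hne : X.Nonempty := by
    apply MeasureTheory.nonempty_of_measure_ne_zero (μ := volume)
    exact fun h0 => by simp [h0] at hx'
  have hdiff : ∀ t ∈ X, ∀ u ∈ X, |t - u| ≤ dr := by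
    intro t ht u hu
    have h1 : edist (toE (Function.update x i t)) (toE (Function.update x i u))
        ≤ EMetric.diam (toE '' A) :=
      EMetric.edist_le_diam_of_mem (Set.mem_image_of_mem _ ht) (Set.mem_image_of_mem _ hu)
    rw [edist_dist] at h1
    have h2 := (ENNReal.ofReal_le_iff_le_toReal hd).mp h1
    calc |t - u| = dist ((Function.update x i t) i) ((Function.update x i u) i) := by
          rw [Function.update_self, Function.update_self, Real.dist_eq]
    _ ≤ dist (toE (Function.update x i t)) (toE (Function.update x i u)) := coord_le_dist _ _ i
    _ ≤ dr := h2
  obtain ⟨t0, ht0⟩ := hne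
  have hba : BddAbove X := ⟨t0 + dr, fun u hu => by
    have h := hdiff u hu t0 ht0; rw [abs_le] at h; linarith [h.1, h.2]⟩
  have hbb : BddBelow X := ⟨t0 - dr, fun u hu => by
    have h := hdiff u hu t0 ht0; rw [abs_le] at h; linarith [h.1, h.2]⟩
  have hsub : X ⊆ Set.Icc (sInf X) (sSup X) :=
    fun u hu => ⟨csInf_le hbb hu, le_csSup hba hu⟩
  have hvol2 : volume X ≤ ENNReal.ofReal (sSup X - sInf X) := by
    calc volume X ≤ volume (Set.Icc (sInf X) (sSup X)) := measure_mono hsub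
    _ = ENNReal.ofReal (sSup X - sInf X) := Real.volume_Icc
  have hfin : volume X ≠ ⊤ := (hvol2.trans_lt ENNReal.ofReal_lt_top).ne
  have hlt : 2 * |x i| < (volume X).toReal := by
    have h3 : (2 : ℝ≥0∞) * ENNReal.ofReal |x i| = ENNReal.ofReal (2 * |x i|) := by
      rw [ENNReal.ofReal_mul (by norm_num)]; norm_num
    rw [h3] at hx'
    exact (ENNReal.ofReal_lt_iff_lt_toReal (by positivity) hfin).mp hx'
  have hnn : 0 ≤ sSup X - sInf X := sub_nonneg.mpr (csInf_le_csSup ⟨t0, ht0⟩ hbb hba)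
  have hm : (volume X).toReal ≤ sSup X - sInf X := by
    have := ENNReal.toReal_mono ENNReal.ofReal_ne_top hvol2
    rwa [ENNReal.toReal_ofReal hnn] at this
  exact ⟨⟨t0, ht0⟩, hbb, hba, hlt, hm⟩

lemma st_diam {A : Set (Fin j → ℝ)} (i : Fin j) :
    EMetric.diam (toE '' st i A) ≤ EMetric.diam (toE '' A) := by
  rcases eq_or_ne (EMetric.diam (toE '' A)) ⊤ with hd | hd
  · rw [hd]; exact le_top
  apply EMetric.diam_le
  rintro _ ⟨x, hx, rfl⟩ _ ⟨y, hy, rfl⟩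
  obtain ⟨hneX, hbX, haX, hltX, hmX⟩ := fiber_props hx hd
  obtain ⟨hneY, hbY, haY, hltY, hmY⟩ := fiber_props hy hd
  have key : ∀ a b : ℝ, a ∈ closure (fib A i x) → b ∈ closure (fib A i y) →
      |x i - y i| ≤ |a - b| → edist (toE x) (toE y) ≤ EMetric.diam (toE '' A) := by
    intro a b ha hb hab
    have hpa := iso_mem_closure_image ha
    have hqb := iso_mem_closure_image hb
    have h1 : edist (toE (Function.update x i a)) (toE (Function.update y i b))
        ≤ EMetric.diam (toE '' A) := by
      have h := EMetric.edist_le_diam_of_mem hpa hqb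
      rwa [EMetric.diam_closure] at h
    have hdle : dist (toE x) (toE y)
        ≤ dist (toE (Function.update x i a)) (toE (Function.update y i b)) := by
      apply dist_le_of_coord i
      · intro k hk
        exact ⟨(Function.update_of_ne hk _ _).symm, (Function.update_of_ne hk _ _).symm⟩
      · rwa [Function.update_self, Function.update_self]
    calc edist (toE x) (toE y)
        = ENNReal.ofReal (dist (toE x) (toE y)) := edist_dist _ _
    _ ≤ ENNReal.ofReal (dist (toE (Function.update x i a)) (toE (Function.update y i b))) :=
        ENNReal.ofReal_le_ofReal hdle
    _ = edist (toE (Function.update x i a)) (toE (Function.update y i b)) := (edist_dist _ _).symm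
    _ ≤ EMetric.diam (toE '' A) := h1
  have habs : |x i - y i| ≤ |x i| + |y i| := abs_sub _ _
  set mX := (volume (fib A i x)).toReal
  set mY := (volume (fib A i y)).toReal
  rcases le_or_gt ((mX + mY)/2) (sSup (fib A i x) - sInf (fib A i y)) with hcase | hcase
  · apply key (sSup (fib A i x)) (sInf (fib A i y))
      (csSup_mem_closure hneX haX) (csInf_mem_closure hneY hbY)
    calc |x i - y i| ≤ sSup (fib A i x) - sInf (fib A i y) := by linarith
    _ ≤ |sSup (fib A i x) - sInf (fib A i y)| := le_abs_self _
  · have hcase2 : (mX + mY)/2 ≤ sSup (fib A i y) - sInf (fib A i x) := by linarith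
    apply key (sInf (fib A i x)) (sSup (fib A i y))
      (csInf_mem_closure hneX hbX) (csSup_mem_closure hneY haY)
    calc |x i - y i| ≤ sSup (fib A i y) - sInf (fib A i x) := by linarith
    _ ≤ |sSup (fib A i y) - sInf (fib A i x)| := le_abs_self _
    _ = |sInf (fib A i x) - sSup (fib A i y)| := abs_sub_comm _ _


lemma volume_ball_sym (m : ℝ≥0∞) : volume {t : ℝ | 2 * ENNReal.ofReal (abs t) < m} = m := by
  rcases eq_or_ne m ⊤ with rfl | hm
  · have : {t : ℝ | 2 * ENNReal.ofReal (abs t) < ⊤} = Set.univ := by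
      ext t; simp [lt_top_iff_ne_top, ENNReal.mul_eq_top]
    rw [this]; simp
  · have : {t : ℝ | 2 * ENNReal.ofReal (abs t) < m} = Set.Ioo (-(m.toReal/2)) (m.toReal/2) := by
      ext t
      have h2 : (2 : ℝ≥0∞) * ENNReal.ofReal (abs t) = ENNReal.ofReal (2 * (abs t)) := by
        rw [ENNReal.ofReal_mul (by norm_num)]; norm_num
      simp only [Set.mem_setOf_eq, Set.mem_Ioo, h2]
      rw [ENNReal.ofReal_lt_iff_lt_toReal (by positivity) hm]
      rw [show (2:ℝ) * |t| < m.toReal ↔ |t| < m.toReal/2 by constructor <;> intro h <;> linarith,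
        abs_lt]
    rw [this, Real.volume_Ioo]
    rw [show m.toReal/2 - -(m.toReal/2) = m.toReal by ring, ENNReal.ofReal_toReal hm]

variable {j : ℕ}

lemma fib_measurable {A : Set (Fin j → ℝ)} (hA : MeasurableSet A) (i : Fin j) (x : Fin j → ℝ) :
    MeasurableSet (fib A i x) := hA.preimage (measurable_update x)

noncomputable abbrev vμ (j : ℕ) : Fin j → Measure ℝ := fun _ => volume

lemma marg_eq {A : Set (Fin j → ℝ)} (hA : MeasurableSet A) (i : Fin j) (x : Fin j → ℝ) :
    (∫⋯∫⁻_{i}, A.indicator 1 ∂(vμ j)) x = volume (fib A i x) := by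
  rw [lmarginal_singleton]
  have h : ∀ t : ℝ, A.indicator (1 : (Fin j → ℝ) → ℝ≥0∞) (Function.update x i t)
      = (fib A i x).indicator 1 t := by
    intro t
    by_cases ht : Function.update x i t ∈ A
    · have ht' : t ∈ fib A i x := ht
      simp [Set.indicator_of_mem ht, Set.indicator_of_mem ht']
    · have ht' : t ∉ fib A i x := ht
      simp [Set.indicator_of_notMem ht, Set.indicator_of_notMem ht']
  simp_rw [h]
  rw [lintegral_indicator_one (fib_measurable hA i x)]

lemma st_eq {A : Set (Fin j → ℝ)} (hA : MeasurableSet A) (i : Fin j) :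
    st i A = {x | 2 * ENNReal.ofReal (abs (x i)) < (∫⋯∫⁻_{i}, A.indicator 1 ∂(vμ j)) x} := by
  ext x; simp only [st, Set.mem_setOf_eq, marg_eq hA]

lemma st_measurable {A : Set (Fin j → ℝ)} (hA : MeasurableSet A) (i : Fin j) :
    MeasurableSet (st i A) := by
  rw [st_eq hA]
  exact measurableSet_lt
    (by fun_prop)
    ((Measurable.indicator measurable_one hA).lmarginal (vμ j))

lemma fib_st (A : Set (Fin j → ℝ)) (i : Fin j) (x : Fin j → ℝ) :
    fib (st i A) i x = {t : ℝ | 2 * ENNReal.ofReal (abs t) < volume (fib A i x)} := by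
  ext t
  have h1 : fib A i (Function.update x i t) = fib A i x := by
    ext u; simp [fib, Function.update_idem]
  simp [fib, st, h1]

lemma st_volume {A : Set (Fin j → ℝ)} (hA : MeasurableSet A) (i : Fin j) :
    volume (st i A) = volume A := by
  rw [← lintegral_indicator_one (st_measurable hA i), ← lintegral_indicator_one hA, volume_pi]
  refine lintegral_eq_of_lmarginal_eq {i}
    (Measurable.indicator measurable_one (st_measurable hA i))
    (Measurable.indicator measurable_one hA) ?_
  funext x
  rw [marg_eq (st_measurable hA i) i x, marg_eq hA i x, fib_st, volume_ball_sym]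

def symP (k : Fin j) (A : Set (Fin j → ℝ)) : Prop :=
  ∀ x ∈ A, Function.update x k (-(x k)) ∈ A

lemma symP_st_self (i : Fin j) (A : Set (Fin j → ℝ)) : symP i (st i A) := by
  intro x hx
  simp only [st, Set.mem_setOf_eq] at hx ⊢
  have h1 : fib A i (Function.update x i (-(x i))) = fib A i x := by
    ext u; simp [fib, Function.update_idem]
  rw [h1, Function.update_self, abs_neg]
  exact hx

lemma symP_st {A : Set (Fin j → ℝ)} {k : Fin j} (i : Fin j) (hk : symP k A) :
    symP k (st i A) := by
  rcases eq_or_ne k i with rfl | hki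
  · exact symP_st_self k A
  intro x hx
  simp only [st, Set.mem_setOf_eq] at hx ⊢
  have key : fib A i (Function.update x k (-(x k))) = fib A i x := by
    ext t
    have e1 : Function.update (Function.update x k (-(x k))) i t
        = Function.update (Function.update x i t) k (-(x k)) :=
      Function.update_comm hki _ _ x
    simp only [fib, Set.mem_setOf_eq, e1]
    constructor
    · intro h
      have h2 := hk _ h
      have e2 : (Function.update (Function.update x i t) k (-(x k))) k = -(x k) :=
        Function.update_self _ _ _
      rw [e2, neg_neg, Function.update_idem] at h2
      have e3 : x k = (Function.update x i t) k := (Function.update_of_ne hki _ _).symm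
      rwa [e3, Function.update_eq_self] at h2
    · intro h
      have h2 := hk _ h
      have e3 : (Function.update x i t) k = x k := Function.update_of_ne hki _ _
      rwa [e3] at h2
  rw [key, Function.update_of_ne hki.symm]
  exact hx

lemma foldr_measurable {A : Set (Fin j → ℝ)} (l : List (Fin j)) (hA : MeasurableSet A) :
    MeasurableSet (l.foldr st A) := by
  induction l with
  | nil => exact hA
  | cons i l ih => exact st_measurable ih i

lemma foldr_volume {A : Set (Fin j → ℝ)} (l : List (Fin j)) (hA : MeasurableSet A) :
    volume (l.foldr st A) = volume A := by
  induction l with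
  | nil => rfl
  | cons i l ih => rw [List.foldr_cons, st_volume (foldr_measurable l hA), ih]

lemma foldr_diam {A : Set (Fin j → ℝ)} (l : List (Fin j)) :
    EMetric.diam (toE '' l.foldr st A) ≤ EMetric.diam (toE '' A) := by
  induction l with
  | nil => exact le_rfl
  | cons i l ih => exact (st_diam i).trans ih

lemma foldr_sym {A : Set (Fin j → ℝ)} (l : List (Fin j)) :
    ∀ k ∈ l, symP k (l.foldr st A) := by
  induction l with
  | nil => intro k hk; cases hk
  | cons i l ih =>
    intro k hk
    rcases List.mem_cons.mp hk with rfl | hk'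
    · exact symP_st_self k _
    · exact symP_st i (ih k hk')

lemma neg_mem_of_sym {S : Set (Fin j → ℝ)} (hsym : ∀ k, symP k S) {x : Fin j → ℝ}
    (hx : x ∈ S) : (fun k => -(x k)) ∈ S := by
  have main : ∀ s : Finset (Fin j), (fun k => if k ∈ s then -(x k) else x k) ∈ S := by
    intro s
    induction s using Finset.induction_on with
    | empty => simpa using hx
    | @insert a s ha ih =>
      have h2 := hsym a _ ih
      have heq : (fun k => if k ∈ insert a s then -(x k) else x k)
          = Function.update (fun k => if k ∈ s then -(x k) else x k) a
            (-((fun k => if k ∈ s then -(x k) else x k) a)) := by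
        funext k
        rcases eq_or_ne k a with rfl | hk
        · simp [Function.update_self, ha]
        · simp [Function.update_of_ne hk, Finset.mem_insert, hk]
      rwa [heq]
  simpa using main Finset.univ

end IsodiametricAux

/-- Isodiametric inequality: for every bounded Borel set `C ⊆ ℝ^j`,
`λ_j(C) ≤ (ω_j / 2^j) (diam C)^j`, where `ω_j` is the volume of the unit ball. -/
theorem stmt_3 (j : ℕ) (C : Set (EuclideanSpace ℝ (Fin j)))
    (hC : MeasurableSet C) (hCb : Bornology.IsBounded C) :
    volume C ≤ volume (Metric.ball (0 : EuclideanSpace ℝ (Fin j)) 1) / 2 ^ j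
      * EMetric.diam C ^ j := by
  classical
  set D := EMetric.diam C with hDdef
  have hD : D ≠ ⊤ := hCb.ediam_ne_top
  set C₀ : Set (Fin j → ℝ) := toE ⁻¹' C with hC₀def
  have hC₀ : MeasurableSet C₀ :=
    hC.preimage (PiLp.volume_preserving_toLp (Fin j)).measurable
  have himg : toE '' C₀ = C :=
    Set.image_preimage_eq C (WithLp.equiv 2 (Fin j → ℝ)).symm.surjective
  set Sf : Set (Fin j → ℝ) := (List.finRange j).foldr st C₀ with hSfdef
  have hSfm : MeasurableSet Sf := foldr_measurable _ hC₀
  have hSdiam : EMetric.diam (toE '' Sf) ≤ D := by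
    have := foldr_diam (A := C₀) (List.finRange j)
    rwa [himg] at this
  have hsym : ∀ k, symP k Sf := fun k => foldr_sym _ k (List.mem_finRange k)
  -- the symmetrized set is contained in the ball of radius D.toReal / 2
  have hsub : toE '' Sf ⊆ Metric.closedBall (0 : EuclideanSpace ℝ (Fin j)) (D.toReal / 2) := by
    rintro _ ⟨x, hxS, rfl⟩
    set z : Fin j → ℝ := fun k => -(x k) with hzdef
    have hz : z ∈ Sf := neg_mem_of_sym hsym hxS
    have h1 : edist (toE x) (toE z) ≤ D :=
      (EMetric.edist_le_diam_of_mem (Set.mem_image_of_mem _ hxS)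
        (Set.mem_image_of_mem _ hz)).trans hSdiam
    rw [edist_dist] at h1
    have h2 : dist (toE x) (toE z) ≤ D.toReal := (ENNReal.ofReal_le_iff_le_toReal hD).mp h1
    have h4 : ∑ k, dist ((toE x) k) ((toE z) k)^2 = (2*‖toE x‖)^2 := by
      rw [EuclideanSpace.norm_eq, mul_pow,
        Real.sq_sqrt (Finset.sum_nonneg fun k _ => sq_nonneg _), Finset.mul_sum]
      refine Finset.sum_congr rfl fun k _ => ?_
      show dist (x k) (z k)^2 = 2^2 * ‖(x k)‖^2
      rw [Real.dist_eq, Real.norm_eq_abs, sq_abs, sq_abs, hzdef]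
      ring
    have h3 : dist (toE x) (toE z) = 2*‖toE x‖ := by
      rw [EuclideanSpace.dist_eq, h4, Real.sqrt_sq (by positivity)]
    rw [Metric.mem_closedBall, dist_zero_right]
    rw [h3] at h2
    linarith
  -- putting everything together
  have hvol1 : volume C = volume Sf := by
    have e1 : volume C₀ = volume C :=
      (PiLp.volume_preserving_toLp (Fin j)).measure_preimage hC.nullMeasurableSet
    rw [← e1, hSfdef, foldr_volume _ hC₀]
  have hvol2 : volume Sf = volume (toE '' Sf) := by
    have himg2 : toE '' Sf = ⇑(WithLp.equiv 2 (Fin j → ℝ)) ⁻¹' Sf := by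
      rw [show toE = ⇑(WithLp.equiv 2 (Fin j → ℝ)).symm from rfl, Equiv.image_eq_preimage_symm, Equiv.symm_symm]
    rw [himg2, (show MeasurePreserving (WithLp.equiv 2 (Fin j → ℝ)) volume volume from PiLp.volume_preserving_ofLp (Fin j)).measure_preimage hSfm.nullMeasurableSet]
  have hball : volume (Metric.closedBall (0 : EuclideanSpace ℝ (Fin j)) (D.toReal / 2))
      = ENNReal.ofReal ((D.toReal / 2) ^ j)
        * volume (Metric.ball (0 : EuclideanSpace ℝ (Fin j)) 1) := by
    rw [MeasureTheory.Measure.addHaar_closedBall _ _ (by positivity), finrank_euclideanSpace_fin]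
  have hof : ENNReal.ofReal ((D.toReal / 2) ^ j) = D ^ j / 2 ^ j := by
    rw [div_pow, ENNReal.ofReal_div_of_pos (by positivity), ENNReal.ofReal_pow D.toReal_nonneg,
      ENNReal.ofReal_toReal hD, ENNReal.ofReal_pow (by norm_num), show ENNReal.ofReal 2 = 2 by norm_num]
  calc volume C = volume (toE '' Sf) := by rw [hvol1, hvol2]
  _ ≤ volume (Metric.closedBall (0 : EuclideanSpace ℝ (Fin j)) (D.toReal / 2)) :=
      measure_mono hsub
  _ = D ^ j / 2 ^ j * volume (Metric.ball (0 : EuclideanSpace ℝ (Fin j)) 1) := by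
      rw [hball, hof]
  _ = volume (Metric.ball (0 : EuclideanSpace ℝ (Fin j)) 1) / 2 ^ j * D ^ j := by
      simp only [div_eq_mul_inv]; ring
end

section
/- Let Z: Ω × W → ℝ^{m+k} (with k ≥ 1) be a C¹ random field on an open set W ⊆ ℝ^ℓ, J ⊆ W a compact set of Hausdorff dimension at most m, and z₀ ∈ ℝ^{m+k} fixed. Assume that for every t ∈ J the random vector Z(t) has a density p_{Z(t)} which is bounded uniformly in t on some neighborhood of z₀: there exist C > 0 and a neighborhood V of z₀ with p_{Z(t)}(v) ≤ C for all t ∈ J, v ∈ V. Then almost surely there is no point t ∈ J with Z(t) = z₀. -/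
open MeasureTheory
open scoped NNReal ENNReal

open Metric Set

lemma key_zero {ℓ N : ℕ} (hN : 1 ≤ N) {Ω : Type*} [MeasurableSpace Ω] (P : Measure Ω)
    (Z : Ω → EuclideanSpace ℝ (Fin ℓ) → EuclideanSpace ℝ (Fin N))
    (S : Set (EuclideanSpace ℝ (Fin ℓ)))
    (hS : μH[(N : ℝ)] S = 0)
    (z₀ : EuclideanSpace ℝ (Fin N)) (C ρ : ℝ) (hρ : 0 < ρ)
    (hball : ∀ t ∈ S, ∀ r : ℝ, 0 ≤ r → r ≤ ρ →
      P {ω | Z ω t ∈ closedBall z₀ r} ≤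
        ENNReal.ofReal C * ENNReal.ofReal (r ^ N) *
          volume (ball (0 : EuclideanSpace ℝ (Fin N)) 1))
    (n : ℕ) :
    P {ω | (∃ t ∈ S, Z ω t = z₀) ∧ LipschitzOnWith (n : ℝ≥0) (Z ω) S} = 0 := by
  rcases S.eq_empty_or_nonempty with hSe | ⟨t₀, ht₀⟩
  · simp [hSe]
  set vB := volume (ball (0 : EuclideanSpace ℝ (Fin N)) 1) with hvBdef
  have hvB : vB ≠ ⊤ := measure_ball_lt_top.ne
  set K : ℝ≥0∞ := ENNReal.ofReal C * vB * ENNReal.ofReal ((n : ℝ) ^ N) with hKdef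
  have hK : K ≠ ⊤ := by
    simp only [hKdef]
    exact ENNReal.mul_ne_top (ENNReal.mul_ne_top ENNReal.ofReal_ne_top hvB) ENNReal.ofReal_ne_top
  set A := {ω | (∃ t ∈ S, Z ω t = z₀) ∧ LipschitzOnWith (n : ℝ≥0) (Z ω) S} with hAdef
  suffices hmain : ∀ δ : ℝ≥0∞, 0 < δ → P A ≤ K * δ by
    refine le_antisymm ?_ zero_le
    refine ENNReal.le_of_forall_pos_le_add fun ε hε _ => ?_
    have hK1 : (K + 1) ≠ 0 := by simp
    have hK1' : (K + 1) ≠ ⊤ := by simp [hK]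
    calc P A ≤ K * ((ε : ℝ≥0∞) / (K + 1)) :=
          hmain _ (ENNReal.div_pos (by exact_mod_cast hε.ne') hK1')
      _ ≤ (K + 1) * ((ε : ℝ≥0∞) / (K + 1)) := mul_le_mul_left le_self_add _
      _ = ε := ENNReal.mul_div_cancel hK1 hK1'
      _ ≤ 0 + ε := by simp
  intro δ hδ
  have h0 := hS
  rw [Measure.hausdorffMeasure_apply] at h0
  simp only [ENNReal.iSup_eq_zero] at h0
  set r₀ : ℝ := ρ / (n + 1) with hr₀def
  have hr₀ : 0 < r₀ := div_pos hρ (by positivity)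
  have h2 := h0 (ENNReal.ofReal r₀) (ENNReal.ofReal_pos.2 hr₀)
  have h3 := h2.trans_lt hδ
  obtain ⟨cs, h4⟩ := iInf_lt_iff.1 h3
  obtain ⟨hcov, h5⟩ := iInf_lt_iff.1 h4
  obtain ⟨hdiam, hsum⟩ := iInf_lt_iff.1 h5
  have hchoice : ∀ i : ℕ, ∃ x ∈ S, ((cs i ∩ S).Nonempty → x ∈ cs i) := by
    intro i
    by_cases h : (cs i ∩ S).Nonempty
    · obtain ⟨x, hx1, hx2⟩ := h; exact ⟨x, hx2, fun _ => hx1⟩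
    · exact ⟨t₀, ht₀, fun h' => absurd h' h⟩
  choose τ hτS hτt using hchoice
  set ri : ℕ → ℝ := fun i => (EMetric.diam (cs i)).toReal with hridef
  have hdiam_ne : ∀ i, EMetric.diam (cs i) ≠ ⊤ :=
    fun i => ((hdiam i).trans_lt ENNReal.ofReal_lt_top).ne
  have hri0 : ∀ i, 0 ≤ ri i := fun i => ENNReal.toReal_nonneg
  have hri : ∀ i, ri i ≤ r₀ := fun i => ENNReal.toReal_le_of_le_ofReal hr₀.le (hdiam i)
  have hnri : ∀ i, (n : ℝ) * ri i ≤ ρ := by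
    intro i
    have h1 : (n : ℝ) * ri i ≤ (n : ℝ) * r₀ :=
      mul_le_mul_of_nonneg_left (hri i) (by positivity)
    refine h1.trans ?_
    rw [hr₀def, mul_div_assoc', div_le_iff₀ (by positivity : (0:ℝ) < (n:ℝ) + 1)]
    nlinarith [hρ.le, Nat.cast_nonneg (α := ℝ) n]
  have hsub : A ⊆ ⋃ i, {ω | Z ω (τ i) ∈ closedBall z₀ ((n : ℝ) * ri i)} := by
    rintro ω ⟨⟨u, huS, huz⟩, hLip⟩
    obtain ⟨i, hi⟩ := mem_iUnion.1 (hcov huS)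
    refine mem_iUnion.2 ⟨i, ?_⟩
    have hne : (cs i ∩ S).Nonempty := ⟨u, hi, huS⟩
    have hτi := hτt i hne
    simp only [mem_setOf_eq, mem_closedBall]
    have h1 : dist (Z ω (τ i)) (Z ω u) ≤ (n : ℝ) * dist (τ i) u :=
      hLip.dist_le_mul _ (hτS i) _ huS
    have h2 : dist (τ i) u ≤ ri i := Metric.dist_le_diam_of_mem' (hdiam_ne i) hτi hi
    calc dist (Z ω (τ i)) z₀ = dist (Z ω (τ i)) (Z ω u) := by rw [huz]
      _ ≤ (n : ℝ) * dist (τ i) u := h1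
      _ ≤ (n : ℝ) * ri i := mul_le_mul_of_nonneg_left h2 (Nat.cast_nonneg n)
  have hterm : ∀ i, P {ω | Z ω (τ i) ∈ closedBall z₀ ((n : ℝ) * ri i)} ≤
      K * ⨆ _ : (cs i).Nonempty, EMetric.diam (cs i) ^ (N : ℝ) := by
    intro i
    have hb := hball (τ i) (hτS i) ((n : ℝ) * ri i)
      (mul_nonneg (Nat.cast_nonneg n) (hri0 i)) (hnri i)
    by_cases hne : (cs i).Nonempty
    · rw [iSup_pos hne]
      refine hb.trans (le_of_eq ?_)
      have he : ENNReal.ofReal (((n : ℝ) * ri i) ^ N) =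
          ENNReal.ofReal ((n : ℝ) ^ N) * EMetric.diam (cs i) ^ (N : ℝ) := by
        rw [mul_pow, ENNReal.ofReal_mul (by positivity), ENNReal.ofReal_pow (hri0 i)]
        congr 1
        rw [← ENNReal.rpow_natCast, hridef]
        simp only [ENNReal.ofReal_toReal (hdiam_ne i)]
      rw [he, hKdef]
      ring
    · have hri_eq : ri i = 0 := by
        simp [hridef, not_nonempty_iff_eq_empty.1 hne, EMetric.diam]
      have : ENNReal.ofReal (((n : ℝ) * ri i) ^ N) = 0 := by
        rw [hri_eq, mul_zero, zero_pow (by omega : N ≠ 0), ENNReal.ofReal_zero]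
      refine le_trans (hb.trans (le_of_eq ?_)) zero_le
      rw [this]; ring
  calc P A ≤ ∑' i, P {ω | Z ω (τ i) ∈ closedBall z₀ ((n : ℝ) * ri i)} :=
        (measure_mono hsub).trans (measure_iUnion_le _)
    _ ≤ ∑' i, K * ⨆ _ : (cs i).Nonempty, EMetric.diam (cs i) ^ (N : ℝ) :=
        ENNReal.tsum_le_tsum hterm
    _ = K * ∑' i, ⨆ _ : (cs i).Nonempty, EMetric.diam (cs i) ^ (N : ℝ) :=
        ENNReal.tsum_mul_left
    _ ≤ K * δ := mul_le_mul_right hsum.le _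

lemma aux_lipschitz {E F : Type*} [NormedAddCommGroup E] [NormedSpace ℝ E] [ProperSpace E]
    [NormedAddCommGroup F] [NormedSpace ℝ F]
    {f : E → F} {t : E} {r : ℝ} (hr : 0 < r)
    (hf : ContDiffOn ℝ 1 f (closedBall t r)) :
    ∃ K : ℝ≥0, LipschitzOnWith K f (closedBall t r) := by
  have hconv : Convex ℝ (closedBall t r) := convex_closedBall t r
  have hu : UniqueDiffOn ℝ (closedBall t r) :=
    uniqueDiffOn_convex hconv (by
      rw [interior_closedBall t hr.ne']
      exact ⟨t, mem_ball_self hr⟩)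
  have hc : ContinuousOn (fderivWithin ℝ f (closedBall t r)) (closedBall t r) :=
    hf.continuousOn_fderivWithin hu le_rfl
  obtain ⟨M, hM⟩ := (isCompact_closedBall t r).exists_bound_of_continuousOn hc
  refine ⟨‖M‖₊, Convex.lipschitzOnWith_of_nnnorm_fderivWithin_le
    (hf.differentiableOn one_ne_zero) (fun x hx => ?_) hconv⟩
  rw [← norm_toNNReal, ← norm_toNNReal (a := M)]
  exact Real.toNNReal_mono ((hM x hx).trans (le_abs_self M))

/-- Let `Z` be a random field on an open set `W ⊆ ℝ^ℓ` with values in `ℝ^{m+k}` (`k ≥ 1`) and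
`C¹` sample paths, `J ⊆ W` compact with Hausdorff dimension at most `m`, and `z₀` a fixed
point.  If the one-dimensional marginals `Z(t)`, `t ∈ J`, admit densities with respect to
Lebesgue measure that are bounded, uniformly in `t ∈ J`, on a neighborhood of `z₀`, then
almost surely there is no `t ∈ J` with `Z(t) = z₀`. -/
theorem stmt_7 (ℓ m k : ℕ) (hk : 1 ≤ k)
    {Ω : Type*} [MeasurableSpace Ω] (P : Measure Ω) [IsProbabilityMeasure P]
    (W : Set (EuclideanSpace ℝ (Fin ℓ))) (hW : IsOpen W)
    (Z : Ω → EuclideanSpace ℝ (Fin ℓ) → EuclideanSpace ℝ (Fin (m + k)))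
    (hmeas : ∀ t, Measurable fun ω => Z ω t)
    (hC1 : ∀ᵐ ω ∂P, ContDiffOn ℝ 1 (Z ω) W)
    (J : Set (EuclideanSpace ℝ (Fin ℓ))) (hJ : IsCompact J) (hJW : J ⊆ W)
    (hdim : dimH J ≤ m)
    (z₀ : EuclideanSpace ℝ (Fin (m + k)))
    (hdens : ∃ C : ℝ, 0 < C ∧ ∃ V ∈ nhds z₀, ∀ t ∈ J,
      ∃ p : EuclideanSpace ℝ (Fin (m + k)) → ℝ≥0∞,
        Measure.map (fun ω => Z ω t) P = volume.withDensity p ∧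
        ∀ v ∈ V, p v ≤ ENNReal.ofReal C) :
    P {ω | ∃ t ∈ J, Z ω t = z₀} = 0 := by
  obtain ⟨C, hCpos, V, hV, hdens⟩ := hdens
  obtain ⟨ρ, hρpos, hρV⟩ := Metric.nhds_basis_closedBall.mem_iff.1 hV
  -- uniform small-ball estimate
  have hball : ∀ t ∈ J, ∀ r : ℝ, 0 ≤ r → r ≤ ρ →
      P {ω | Z ω t ∈ closedBall z₀ r} ≤
        ENNReal.ofReal C * ENNReal.ofReal (r ^ (m + k)) *
          volume (ball (0 : EuclideanSpace ℝ (Fin (m + k))) 1) := by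
    intro t ht r hr0 hrρ
    obtain ⟨p, hp, hpV⟩ := hdens t ht
    have hmap : P {ω | Z ω t ∈ closedBall z₀ r} =
        (Measure.map (fun ω => Z ω t) P) (closedBall z₀ r) := by
      rw [Measure.map_apply (hmeas t) measurableSet_closedBall]; rfl
    rw [hmap, hp, withDensity_apply _ measurableSet_closedBall]
    have hae : ∀ᵐ v ∂(volume.restrict (closedBall z₀ r)), p v ≤ ENNReal.ofReal C :=
      ae_restrict_of_forall_mem measurableSet_closedBall fun v hv =>
        hpV v (hρV (closedBall_subset_closedBall hrρ hv))
    calc ∫⁻ v in closedBall z₀ r, p v ≤ ∫⁻ _ in closedBall z₀ r, ENNReal.ofReal C :=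
          lintegral_mono_ae hae
      _ = ENNReal.ofReal C * volume (closedBall z₀ r) := by rw [setLIntegral_const]
      _ = ENNReal.ofReal C * (ENNReal.ofReal (r ^ (m + k)) *
            volume (ball (0 : EuclideanSpace ℝ (Fin (m + k))) 1)) := by
          rw [Measure.addHaar_closedBall _ _ hr0, finrank_euclideanSpace_fin]
      _ = _ := by ring
  -- radii for a finite cover of J
  have hrad : ∀ t : EuclideanSpace ℝ (Fin ℓ), t ∈ J →
      ∃ r : ℝ, 0 < r ∧ closedBall t r ⊆ W := by
    intro t ht
    obtain ⟨r, hr, hsub⟩ := Metric.nhds_basis_closedBall.mem_iff.1 (hW.mem_nhds (hJW ht))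
    exact ⟨r, hr, hsub⟩
  choose! rad hradpos hradW using hrad
  have hcov : J ⊆ ⋃ t ∈ J, ball t (rad t) :=
    fun t ht => mem_biUnion ht (mem_ball_self (hradpos t ht))
  obtain ⟨s, hsJ, hsfin, hscov⟩ :=
    hJ.elim_finite_subcover_image (fun t _ => isOpen_ball) hcov
  set St : EuclideanSpace ℝ (Fin ℓ) → Set (EuclideanSpace ℝ (Fin ℓ)) :=
    fun t => J ∩ closedBall t (rad t) with hStdef
  set D : EuclideanSpace ℝ (Fin ℓ) → ℕ → Set Ω := fun t n =>
    {ω | (∃ u ∈ St t, Z ω u = z₀) ∧ LipschitzOnWith (n : ℝ≥0) (Z ω) (St t)} with hDdef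
  have hincl : {ω | ∃ t ∈ J, Z ω t = z₀} ⊆
      (⋃ t ∈ s, ⋃ n : ℕ, D t n) ∪ {ω | ¬ ContDiffOn ℝ 1 (Z ω) W} := by
    rintro ω ⟨u, huJ, huz⟩
    by_cases hg : ContDiffOn ℝ 1 (Z ω) W
    · obtain ⟨t, hts, hub⟩ := mem_iUnion₂.1 (hscov huJ)
      have htJ : t ∈ J := hsJ hts
      obtain ⟨K, hK⟩ := aux_lipschitz (hradpos t htJ) (hg.mono (hradW t htJ))
      have hK' : LipschitzOnWith ((⌈K⌉₊ : ℕ) : ℝ≥0) (Z ω) (closedBall t (rad t)) :=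
        fun x hx y hy => (hK hx hy).trans
          (mul_le_mul_left (ENNReal.coe_le_coe.2 (Nat.le_ceil K)) _)
      refine mem_union_left _ (mem_biUnion hts (mem_iUnion.2 ⟨⌈K⌉₊, ?_⟩))
      exact ⟨⟨u, ⟨huJ, ball_subset_closedBall hub⟩, huz⟩,
        hK'.mono inter_subset_right⟩
    · exact mem_union_right _ hg
  have hD0 : ∀ t ∈ s, ∀ n : ℕ, P (D t n) = 0 := by
    intro t hts n
    have hdimS : dimH (St t) < (((m + k : ℕ) : ℝ≥0) : ℝ≥0∞) := by
      refine lt_of_le_of_lt ((dimH_mono inter_subset_left).trans hdim) ?_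
      norm_cast
      omega
    have hS0 : μH[((m + k : ℕ) : ℝ)] (St t) = 0 := by
      have h := hausdorffMeasure_of_dimH_lt hdimS
      exact_mod_cast h
    exact key_zero (by omega) P Z (St t) hS0 z₀ C ρ hρpos
      (fun u hu => hball u hu.1) n
  have hU0 : P (⋃ t ∈ s, ⋃ n : ℕ, D t n) = 0 := by
    rw [measure_biUnion_null_iff hsfin.countable]
    intro t hts
    rw [measure_iUnion_null_iff]
    exact hD0 t hts
  have hG0 : P {ω | ¬ ContDiffOn ℝ 1 (Z ω) W} = 0 := ae_iff.1 hC1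
  refine le_antisymm ?_ zero_le
  calc P {ω | ∃ t ∈ J, Z ω t = z₀} ≤
        P (⋃ t ∈ s, ⋃ n : ℕ, D t n) + P {ω | ¬ ContDiffOn ℝ 1 (Z ω) W} :=
      (measure_mono hincl).trans (measure_union_le _ _)
    _ = 0 := by rw [hU0, hG0, add_zero]
end

section
/- Geman's lemma: let r be the covariance of a centered stationary Gaussian process with r(0) = 1, r twice differentiable, λ₂ = -r''(0) < ∞, and -r'(τ)/τ → λ₂ as τ → 0⁺. Let σ²(τ) = -r''(0) - (r'(τ))²/(1 - r²(τ)). Then there exists δ > 0 such that ∫₀^δ (r''(τ) - r''(0))/τ dτ < ∞ if and only if ∫₀^δ σ²(τ)/(1 - r²(τ))^{1/2} dτ < ∞. -/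
open MeasureTheory

section aux
open Set

lemma tonelli_core (g : ℝ → ℝ) (hg : Continuous g) (δ M : ℝ) (hδ : 0 < δ)
    (hgnn : ∀ s ∈ Set.Ioc (0:ℝ) δ, 0 ≤ g s) (hgb : ∀ s ∈ Set.Ioc (0:ℝ) δ, g s ≤ M) :
    ((∫⁻ τ in Set.Ioc (0:ℝ) δ, ENNReal.ofReal ((∫ s in (0:ℝ)..τ, s * g s) / τ^3)) ≠ ⊤
      ↔ (∫⁻ τ in Set.Ioc (0:ℝ) δ, ENNReal.ofReal (g τ / τ)) ≠ ⊤) := by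
  set S : Set (ℝ × ℝ) := {q | 0 < q.2 ∧ q.2 ≤ q.1 ∧ q.1 ≤ δ} with hS
  have hSm : MeasurableSet S := by
    apply MeasurableSet.inter (measurableSet_lt measurable_const measurable_snd)
    exact (measurableSet_le measurable_snd measurable_fst).inter
      (measurableSet_le measurable_fst measurable_const)
  set ψ : ℝ × ℝ → ENNReal := fun q => ENNReal.ofReal (q.2 * g q.2 / q.1 ^ 3) with hψ
  have hψm : Measurable ψ :=
    ((measurable_snd.mul (hg.measurable.comp measurable_snd)).div
      (measurable_fst.pow_const 3)).ennreal_ofReal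
  set Φ : ℝ × ℝ → ENNReal := S.indicator ψ with hΦ
  have hΦm : Measurable Φ := hψm.indicator hSm
  have hgm : Measurable fun s : ℝ => ENNReal.ofReal (s * g s) :=
    (measurable_id.mul hg.measurable).ennreal_ofReal
  -- Step A : outer integral representation
  have stepA : (∫⁻ τ, ∫⁻ s, Φ (τ, s))
      = ∫⁻ τ in Set.Ioc (0:ℝ) δ, ENNReal.ofReal ((∫ s in (0:ℝ)..τ, s * g s) / τ^3) := by
    rw [← lintegral_indicator measurableSet_Ioc]
    congr 1
    funext τ
    by_cases hτ : τ ∈ Set.Ioc (0:ℝ) δ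
    · rw [Set.indicator_of_mem hτ]
      have hfun : (fun s => Φ (τ, s))
          = (Set.Ioc (0:ℝ) τ).indicator (fun s => ENNReal.ofReal (s * g s / τ^3)) := by
        funext s
        by_cases hs : s ∈ Set.Ioc (0:ℝ) τ
        · rw [Set.indicator_of_mem hs, hΦ, Set.indicator_of_mem]
          exact ⟨hs.1, hs.2, hτ.2⟩
        · rw [Set.indicator_of_notMem hs, hΦ, Set.indicator_of_notMem]
          exact fun hmem => hs ⟨hmem.1, hmem.2.1⟩
      rw [hfun, lintegral_indicator measurableSet_Ioc]
      have hint : IntegrableOn (fun s => s * g s) (Set.Ioc 0 τ) volume :=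
        (continuous_id.mul hg).integrableOn_Ioc
      have hnn : 0 ≤ᵐ[volume.restrict (Set.Ioc (0:ℝ) τ)] fun s => s * g s :=
        (ae_restrict_iff' measurableSet_Ioc).2 (Filter.Eventually.of_forall
          fun s hs => mul_nonneg hs.1.le (hgnn s ⟨hs.1, hs.2.trans hτ.2⟩))
      have hτ3 : (0:ℝ) < τ ^ 3 := pow_pos hτ.1 3
      calc ∫⁻ s in Set.Ioc (0:ℝ) τ, ENNReal.ofReal (s * g s / τ^3)
          = ∫⁻ s in Set.Ioc (0:ℝ) τ, ENNReal.ofReal (s * g s) / ENNReal.ofReal (τ^3) := by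
            apply lintegral_congr; intro s; exact ENNReal.ofReal_div_of_pos hτ3
        _ = (∫⁻ s in Set.Ioc (0:ℝ) τ, ENNReal.ofReal (s * g s)) / ENNReal.ofReal (τ^3) := by
            simp_rw [div_eq_mul_inv]
            exact lintegral_mul_const _ hgm
        _ = ENNReal.ofReal (∫ s in Set.Ioc (0:ℝ) τ, s * g s) / ENNReal.ofReal (τ^3) := by
            rw [ofReal_integral_eq_lintegral_ofReal hint hnn]
        _ = ENNReal.ofReal ((∫ s in (0:ℝ)..τ, s * g s) / τ^3) := by
            rw [ENNReal.ofReal_div_of_pos hτ3, intervalIntegral.integral_of_le hτ.1.le]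
    · rw [Set.indicator_of_notMem hτ]
      have : (fun s => Φ (τ, s)) = fun _ => (0:ENNReal) := by
        funext s
        rw [hΦ, Set.indicator_of_notMem]
        intro hmem
        exact hτ ⟨lt_of_lt_of_le hmem.1 hmem.2.1, hmem.2.2⟩
      rw [this, lintegral_const, zero_mul]
  -- swap
  have hswap : (∫⁻ τ, ∫⁻ s, Φ (τ, s)) = ∫⁻ s, ∫⁻ τ, Φ (τ, s) :=
    lintegral_lintegral_swap (by exact hΦm.aemeasurable)
  -- Step C : inner representation after swap
  have stepC : (∫⁻ s, ∫⁻ τ, Φ (τ, s))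
      = ∫⁻ s in Set.Ioc (0:ℝ) δ,
          ENNReal.ofReal (s * g s) * ENNReal.ofReal (1/(2*s^2) - 1/(2*δ^2)) := by
    rw [← lintegral_indicator measurableSet_Ioc]
    congr 1
    funext s
    by_cases hs : s ∈ Set.Ioc (0:ℝ) δ
    · rw [Set.indicator_of_mem hs]
      have hfun : (fun τ => Φ (τ, s))
          = (Set.Icc s δ).indicator (fun τ => ENNReal.ofReal (s * g s / τ^3)) := by
        funext τ
        by_cases hτ : τ ∈ Set.Icc s δ
        · rw [Set.indicator_of_mem hτ, hΦ, Set.indicator_of_mem]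
          exact ⟨hs.1, hτ.1, hτ.2⟩
        · rw [Set.indicator_of_notMem hτ, hΦ, Set.indicator_of_notMem]
          exact fun hmem => hτ ⟨hmem.2.1, hmem.2.2⟩
      rw [hfun, lintegral_indicator measurableSet_Icc]
      rw [show (volume : Measure ℝ).restrict (Set.Icc s δ)
            = volume.restrict (Set.Ioc s δ) from
          (Measure.restrict_congr_set Ioc_ae_eq_Icc).symm]
      have hsgnn : 0 ≤ s * g s := mul_nonneg hs.1.le (hgnn s hs)
      calc ∫⁻ τ in Set.Ioc s δ, ENNReal.ofReal (s * g s / τ^3)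
          = ∫⁻ τ in Set.Ioc s δ, ENNReal.ofReal (s * g s) * ENNReal.ofReal (1/τ^3) := by
            apply setLIntegral_congr_fun measurableSet_Ioc
            intro τ hτ
            dsimp only
            rw [← ENNReal.ofReal_mul hsgnn]
            congr 1
            rw [div_eq_mul_inv, one_div]
        _ = ENNReal.ofReal (s * g s) * ∫⁻ τ in Set.Ioc s δ, ENNReal.ofReal (1/τ^3) := by
            exact lintegral_const_mul _ (by
              exact (measurable_const.div (measurable_id.pow_const 3)).ennreal_ofReal)
        _ = ENNReal.ofReal (s * g s) * ENNReal.ofReal (1/(2*s^2) - 1/(2*δ^2)) := by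
            congr 1
            -- compute the lintegral of 1/τ^3 over Ioc s δ
            have hcont : ContinuousOn (fun τ : ℝ => 1/τ^3) (Set.Icc s δ) := by
              apply ContinuousOn.div continuousOn_const (continuousOn_pow 3)
              intro τ hτ
              exact pow_ne_zero _ (ne_of_gt (lt_of_lt_of_le hs.1 hτ.1))
            have hint : IntegrableOn (fun τ : ℝ => 1/τ^3) (Set.Ioc s δ) volume :=
              (hcont.integrableOn_Icc).mono_set Set.Ioc_subset_Icc_self
            have hnn : 0 ≤ᵐ[volume.restrict (Set.Ioc s δ)] fun τ : ℝ => 1/τ^3 :=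
              (ae_restrict_iff' measurableSet_Ioc).2 (Filter.Eventually.of_forall
                fun τ hτ => by
                  have h0 : (0:ℝ) < τ := hs.1.trans hτ.1
                  positivity)
            rw [← ofReal_integral_eq_lintegral_ofReal hint hnn]
            congr 1
            rw [← intervalIntegral.integral_of_le hs.2]
            have hder : ∀ x ∈ Set.uIcc s δ,
                HasDerivAt (fun τ : ℝ => -1/(2*τ^2)) (1/x^3) x := by
              intro x hx
              rw [Set.uIcc_of_le hs.2] at hx
              have hx0 : x ≠ 0 := ne_of_gt (lt_of_lt_of_le hs.1 hx.1)
              have h1 : HasDerivAt (fun τ : ℝ => τ^2) (2*x) x := by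
                simpa using hasDerivAt_pow 2 x
              have h2 := (h1.inv (pow_ne_zero 2 hx0)).const_mul (-1/2 : ℝ)
              have heq : (fun τ : ℝ => -1/(2*τ^2)) = fun y : ℝ => (-1/2 : ℝ) * (y^2)⁻¹ := by
                funext y
                rw [div_eq_mul_inv, div_eq_mul_inv, mul_inv]
                ring
              rw [heq]
              refine h2.congr_deriv ?_
              field_simp
            rw [intervalIntegral.integral_eq_sub_of_hasDerivAt hder
              (hcont.intervalIntegrable_of_Icc hs.2)]
            ring
    · rw [Set.indicator_of_notMem hs]
      have : (fun τ => Φ (τ, s)) = fun _ => (0:ENNReal) := by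
        funext τ
        rw [hΦ, Set.indicator_of_notMem]
        intro hmem
        exact hs ⟨hmem.1, hmem.2.1.trans hmem.2.2⟩
      rw [this, lintegral_const, zero_mul]
  set T := ∫⁻ s in Set.Ioc (0:ℝ) δ,
      ENNReal.ofReal (s * g s) * ENNReal.ofReal (1/(2*s^2) - 1/(2*δ^2)) with hT
  set J := ∫⁻ τ in Set.Ioc (0:ℝ) δ, ENNReal.ofReal (g τ / τ) with hJ
  have hLT : (∫⁻ τ in Set.Ioc (0:ℝ) δ,
      ENNReal.ofReal ((∫ s in (0:ℝ)..τ, s * g s) / τ^3)) = T := by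
    rw [← stepA, hswap, stepC]
  rw [hLT]
  have hM0 : 0 ≤ M := le_trans (hgnn δ ⟨hδ, le_refl δ⟩) (hgb δ ⟨hδ, le_refl δ⟩)
  -- T ≤ J
  have hTJ : T ≤ J := by
    apply setLIntegral_mono ((hg.measurable.div measurable_id).ennreal_ofReal)
    intro s hs
    have hs0 := hs.1
    have hsgnn : 0 ≤ s * g s := mul_nonneg hs0.le (hgnn s hs)
    rw [← ENNReal.ofReal_mul hsgnn]
    apply ENNReal.ofReal_le_ofReal
    have h1 : 1/(2*s^2) - 1/(2*δ^2) ≤ 1/s^2 := by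
      have hA : (0:ℝ) ≤ 1/(2*δ^2) := by positivity
      have hs2 : (0:ℝ) < s^2 := by positivity
      have hB : 1/(2*s^2) ≤ 1/s^2 := by
        apply one_div_le_one_div_of_le hs2
        linarith
      linarith
    calc s * g s * (1/(2*s^2) - 1/(2*δ^2)) ≤ s * g s * (1/s^2) :=
          mul_le_mul_of_nonneg_left h1 hsgnn
      _ = g s / s := by field_simp; try ring
  -- J ≤ 4*T + tail
  have hJT : J ≤ 4*T + ENNReal.ofReal (2*M/δ) * volume (Set.Ioc (δ/2) δ) := by
    have hsplit : Set.Ioc (0:ℝ) δ = Set.Ioc (0:ℝ) (δ/2) ∪ Set.Ioc (δ/2) δ :=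
      (Set.Ioc_union_Ioc_eq_Ioc (by linarith) (by linarith)).symm
    rw [hJ, hsplit, lintegral_union measurableSet_Ioc (Set.Ioc_disjoint_Ioc_of_le le_rfl)]
    apply add_le_add
    · -- part1 ≤ 4*T
      calc (∫⁻ τ in Set.Ioc (0:ℝ) (δ/2), ENNReal.ofReal (g τ / τ))
          ≤ ∫⁻ s in Set.Ioc (0:ℝ) (δ/2),
              4 * (ENNReal.ofReal (s * g s) * ENNReal.ofReal (1/(2*s^2) - 1/(2*δ^2))) := by
            apply setLIntegral_mono
            · exact (measurable_const.mul (hgm.mul ((measurable_const.div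
                ((measurable_id.pow_const 2).const_mul 2)).sub
                measurable_const).ennreal_ofReal))
            intro s hs
            have hs0 := hs.1
            have hsδ : s ≤ δ := hs.2.trans (by linarith)
            have hgn : 0 ≤ g s := hgnn s ⟨hs0, hsδ⟩
            have hsgnn : 0 ≤ s * g s := mul_nonneg hs0.le hgn
            have key : 1/(4*s^2) ≤ 1/(2*s^2) - 1/(2*δ^2) := by
              have h2s : 2*s ≤ δ := by linarith [hs.2]
              have h4s : 4*s^2 ≤ δ^2 := by nlinarith
              have hd2 : (0:ℝ) < δ^2 := by positivity
              have hs2 : (0:ℝ) < s^2 := by positivity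
              rw [div_sub_div _ _ (by positivity) (by positivity), div_le_div_iff₀ (by positivity) (by positivity)]
              ring_nf
              nlinarith
            have knn : (0:ℝ) ≤ 1/(4*s^2) := by positivity
            calc ENNReal.ofReal (g s / s)
                = 4 * ENNReal.ofReal (s * g s * (1/(4*s^2))) := by
                  rw [show (4:ENNReal) = ENNReal.ofReal (4:ℝ) by simp,
                    ← ENNReal.ofReal_mul (by norm_num)]
                  congr 1
                  field_simp
              _ ≤ 4 * (ENNReal.ofReal (s * g s) * ENNReal.ofReal (1/(2*s^2) - 1/(2*δ^2))) := by
                  apply mul_le_mul_right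
                  rw [← ENNReal.ofReal_mul hsgnn]
                  exact ENNReal.ofReal_le_ofReal
                    (mul_le_mul_of_nonneg_left key hsgnn)
        _ = 4 * ∫⁻ s in Set.Ioc (0:ℝ) (δ/2),
              ENNReal.ofReal (s * g s) * ENNReal.ofReal (1/(2*s^2) - 1/(2*δ^2)) :=
            lintegral_const_mul 4 (hgm.mul ((measurable_const.div
              ((measurable_id.pow_const 2).const_mul 2)).sub
              measurable_const).ennreal_ofReal)
        _ ≤ 4 * T :=
            mul_le_mul_right (lintegral_mono_set (Set.Ioc_subset_Ioc_right (by linarith))) 4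
    · -- tail
      calc (∫⁻ τ in Set.Ioc (δ/2) δ, ENNReal.ofReal (g τ / τ))
          ≤ ∫⁻ _ in Set.Ioc (δ/2) δ, ENNReal.ofReal (2*M/δ) := by
            apply setLIntegral_mono measurable_const
            intro τ hτ
            apply ENNReal.ofReal_le_ofReal
            have hτ0 : (0:ℝ) < τ := lt_trans (by linarith) hτ.1
            have hgle : g τ ≤ M := hgb τ ⟨hτ0, hτ.2⟩
            rw [div_le_div_iff₀ hτ0 hδ]
            nlinarith [hτ.1]
        _ = ENNReal.ofReal (2*M/δ) * volume (Set.Ioc (δ/2) δ) := setLIntegral_const _ _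
  constructor
  · intro hTne
    intro hJtop
    have : J ≠ ⊤ := by
      apply ne_top_of_le_ne_top _ hJT
      apply ENNReal.add_ne_top.mpr
      constructor
      · exact ENNReal.mul_ne_top (by norm_num) hTne
      · exact ENNReal.mul_ne_top ENNReal.ofReal_ne_top measure_Ioc_lt_top.ne
    exact this hJtop
  · intro hJne
    exact ne_top_of_le_ne_top hJne hTJ


lemma integrableOn_iff_of_bounds {f h : ℝ → ℝ} {δ C c₁ c₂ : ℝ} (hδ : 0 < δ)
    (hc₁ : 0 < c₁) (hc₂ : 0 ≤ c₂) (hC : 0 ≤ C)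
    (hfm : AEStronglyMeasurable f (volume.restrict (Set.Ioc 0 δ)))
    (hhm : AEStronglyMeasurable h (volume.restrict (Set.Ioc 0 δ)))
    (hh0 : ∀ x ∈ Set.Ioc (0:ℝ) δ, 0 ≤ h x)
    (hub : ∀ x ∈ Set.Ioc (0:ℝ) δ, f x ≤ c₂ * h x)
    (hlb : ∀ x ∈ Set.Ioc (0:ℝ) δ, c₁ * h x - C ≤ f x) :
    IntegrableOn f (Set.Ioc 0 δ) volume ↔ IntegrableOn h (Set.Ioc 0 δ) volume := by
  constructor
  · intro hf
    apply Integrable.mono' (g := fun x => c₁⁻¹ * (|f x| + C))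
      ((hf.abs.add (integrableOn_const measure_Ioc_lt_top.ne)).const_mul c₁⁻¹) hhm
    rw [ae_restrict_iff' measurableSet_Ioc]
    apply Filter.Eventually.of_forall
    intro x hx
    rw [Real.norm_eq_abs, abs_of_nonneg (hh0 x hx)]
    have h1 := hlb x hx
    have h2 : f x ≤ |f x| := le_abs_self _
    rw [le_inv_mul_iff₀ hc₁]
    nlinarith
  · intro hh
    apply Integrable.mono' (g := fun x => c₂ * h x + C)
      ((hh.const_mul c₂).add (integrableOn_const measure_Ioc_lt_top.ne)) hfm
    rw [ae_restrict_iff' measurableSet_Ioc]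
    apply Filter.Eventually.of_forall
    intro x hx
    rw [Real.norm_eq_abs, abs_le]
    constructor
    · have := hlb x hx
      have := mul_nonneg hc₂ (hh0 x hx)
      have := mul_nonneg hc₁.le (hh0 x hx)
      nlinarith
    · have := hub x hx
      linarith

end aux

set_option maxHeartbeats 1600000 in
/-- Geman's lemma: for the covariance `r` of a centered stationary Gaussian process with
`r(0) = 1`, `r` twice (continuously) differentiable, `λ₂ = -r''(0)` and
`-r'(τ)/τ → λ₂` as `τ → 0⁺`, setting `σ²(τ) = -r''(0) - r'(τ)²/(1 - r(τ)²)`, there is a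
`δ > 0` such that `∫₀^δ (r''(τ) - r''(0))/τ dτ < ∞` iff
`∫₀^δ σ²(τ)/(1 - r(τ)²)^{1/2} dτ < ∞`. -/
theorem stmt_11 (r : ℝ → ℝ) (δ₀ : ℝ) (hδ₀ : 0 < δ₀)
    (hC2 : ContDiff ℝ 2 r) (hr0 : r 0 = 1)
    (lam2 : ℝ) (hlam2 : deriv (deriv r) 0 = -lam2)
    (hlim : Filter.Tendsto (fun τ => -(deriv r τ) / τ) (nhdsWithin 0 (Set.Ioi 0))
      (nhds lam2))
    (hrlt : ∀ τ ∈ Set.Ioc (0 : ℝ) δ₀, r τ < 1)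
    (hmono : ∀ τ ∈ Set.Ioc (0 : ℝ) δ₀, deriv (deriv r) 0 ≤ deriv (deriv r) τ)
    (heven : ∀ τ, r (-τ) = r τ) :
    ∃ δ > 0,
      (IntegrableOn (fun τ => (deriv (deriv r) τ - deriv (deriv r) 0) / τ)
          (Set.Ioc 0 δ) volume
        ↔ IntegrableOn
            (fun τ => (-(deriv (deriv r) 0) - (deriv r τ) ^ 2 / (1 - (r τ) ^ 2))
              / Real.sqrt (1 - (r τ) ^ 2)) (Set.Ioc 0 δ) volume) := by
  -- smoothness facts
  have h2' : ContDiff ℝ ((1:ℕ∞)+1) r := by exact_mod_cast hC2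
  have h1' := (contDiff_succ_iff_deriv.mp h2').2.2
  have h0' : ContDiff ℝ ((0:ℕ∞)+1) (deriv r) := by exact_mod_cast h1'
  have hdiff : Differentiable ℝ r := (contDiff_succ_iff_deriv.mp h2').1
  have hdiff' : Differentiable ℝ (deriv r) := (contDiff_succ_iff_deriv.mp h0').1
  have hcont'' : Continuous (deriv (deriv r)) := (contDiff_succ_iff_deriv.mp h0').2.2.continuous
  have hcont' : Continuous (deriv r) := hdiff'.continuous
  have hcr : Continuous r := hdiff.continuous
  -- r'(0) = 0
  have hr'0 : deriv r 0 = 0 := by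
    have htend : Filter.Tendsto (fun τ => deriv r τ) (nhdsWithin 0 (Set.Ioi 0))
        (nhds (deriv r 0)) := (hcont'.tendsto 0).mono_left nhdsWithin_le_nhds
    have htend2 : Filter.Tendsto (fun τ => deriv r τ) (nhdsWithin 0 (Set.Ioi 0)) (nhds 0) := by
      have hid : Filter.Tendsto (fun τ : ℝ => τ) (nhdsWithin 0 (Set.Ioi 0)) (nhds 0) :=
        Filter.tendsto_id.mono_right nhdsWithin_le_nhds
      have := (hlim.mul hid).neg
      rw [mul_zero, neg_zero] at this
      apply this.congr'
      filter_upwards [self_mem_nhdsWithin] with τ hτ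
      have hτ0 : τ ≠ 0 := ne_of_gt hτ
      field_simp
    exact (tendsto_nhds_unique htend htend2)
  -- FTC facts
  have ftc' : ∀ x : ℝ, ∫ s in (0:ℝ)..x, deriv (deriv r) s = deriv r x - deriv r 0 :=
    fun x => intervalIntegral.integral_deriv_eq_sub (fun y _ => hdiff' y)
      (hcont''.intervalIntegrable _ _)
  have ftc : ∀ x : ℝ, ∫ s in (0:ℝ)..x, deriv r s = r x - 1 := by
    intro x
    rw [intervalIntegral.integral_deriv_eq_sub (fun y _ => hdiff y)
      (hcont'.intervalIntegrable _ _), hr0]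
  -- lam2 > 0
  have hlam2pos : 0 < lam2 := by
    by_contra hneg
    push_neg at hneg
    have h1 : ∀ x ∈ Set.Ioc (0:ℝ) δ₀, 0 ≤ deriv r x := by
      intro x hx
      have hx' := ftc' x
      rw [hr'0, sub_zero] at hx'
      rw [← hx']
      apply intervalIntegral.integral_nonneg hx.1.le
      intro s hs
      rcases eq_or_lt_of_le hs.1 with h | h
      · rw [← h, hlam2]; linarith
      · have := hmono s ⟨h, hs.2.trans hx.2⟩
        rw [hlam2] at this; linarith
    have h2 : 0 ≤ r δ₀ - 1 := by
      rw [← ftc δ₀]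
      apply intervalIntegral.integral_nonneg hδ₀.le
      intro s hs
      rcases eq_or_lt_of_le hs.1 with h | h
      · rw [← h, hr'0]
      · exact h1 s ⟨h, hs.2⟩
    have := hrlt δ₀ ⟨hδ₀, le_refl _⟩
    linarith
  -- choice of δ
  obtain ⟨η₁, hη₁pos, hη₁⟩ := Metric.tendsto_nhdsWithin_nhds.mp hlim (lam2/2) (by positivity)
  obtain ⟨η₂, hη₂pos, hη₂⟩ := Metric.tendsto_nhds_nhds.mp (hcont''.tendsto 0) lam2 hlam2pos
  set δ := min δ₀ (min (η₁/2) (min (η₂/2) (Real.sqrt (1/(8*lam2))))) with hδdef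
  have hsq8 : (0:ℝ) < 1/(8*lam2) := by positivity
  have hδpos : 0 < δ :=
    lt_min hδ₀ (lt_min (by positivity) (lt_min (by positivity) (Real.sqrt_pos.2 hsq8)))
  have hδδ₀ : δ ≤ δ₀ := min_le_left _ _
  have hδη₁ : δ < η₁ :=
    lt_of_le_of_lt ((min_le_right _ _).trans (min_le_left _ _)) (by linarith)
  have hδη₂ : δ < η₂ :=
    lt_of_le_of_lt ((min_le_right _ _).trans ((min_le_right _ _).trans (min_le_left _ _)))
      (by linarith)
  have hδsq : lam2 * δ^2 ≤ 1/4 := by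
    have hle : δ ≤ Real.sqrt (1/(8*lam2)) :=
      (min_le_right _ _).trans ((min_le_right _ _).trans (min_le_right _ _))
    have h2 : δ^2 ≤ 1/(8*lam2) := by
      rw [← Real.sq_sqrt hsq8.le]
      exact pow_le_pow_left₀ hδpos.le hle 2
    have := mul_le_mul_of_nonneg_left h2 hlam2pos.le
    calc lam2 * δ^2 ≤ lam2 * (1/(8*lam2)) := this
      _ = 1/8 := by field_simp; try ring
      _ ≤ 1/4 := by norm_num
  refine ⟨δ, hδpos, ?_⟩
  set g : ℝ → ℝ := fun τ => deriv (deriv r) τ + lam2 with hgdef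
  have hgc : Continuous g := hcont''.add continuous_const
  have hgpos : ∀ τ ∈ Set.Ioc (0:ℝ) δ, 0 ≤ g τ := by
    intro τ hτ
    have := hmono τ ⟨hτ.1, hτ.2.trans hδδ₀⟩
    rw [hlam2] at this
    simp only [hgdef]
    linarith
  have hgM : ∀ τ ∈ Set.Ioc (0:ℝ) δ, g τ ≤ lam2 := by
    intro τ hτ
    have hd : dist τ 0 < η₂ := by
      rw [Real.dist_eq, sub_zero, abs_of_pos hτ.1]; linarith [hτ.2]
    have h := hη₂ hd
    rw [Real.dist_eq, hlam2] at h
    have h2 := abs_lt.mp h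
    simp only [hgdef]
    linarith [h2.2]
  have hr'b : ∀ τ ∈ Set.Ioc (0:ℝ) δ, lam2/2 * τ ≤ -(deriv r τ) ∧ -(deriv r τ) ≤ 2*lam2*τ := by
    intro τ hτ
    have hd : dist τ 0 < η₁ := by
      rw [Real.dist_eq, sub_zero, abs_of_pos hτ.1]; linarith [hτ.2]
    have h := hη₁ (Set.mem_Ioi.2 hτ.1) hd
    rw [Real.dist_eq] at h
    have h2 := abs_lt.mp h
    constructor
    · have h1 : lam2/2 ≤ -(deriv r τ)/τ := by linarith [h2.1]
      have := (le_div_iff₀ hτ.1).mp h1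
      linarith
    · have h1 : -(deriv r τ)/τ ≤ 2*lam2 := by linarith [h2.2]
      have := (div_le_iff₀ hτ.1).mp h1
      linarith
  have hrb : ∀ τ ∈ Set.Ioc (0:ℝ) δ, lam2/4 * τ^2 ≤ 1 - r τ ∧ 1 - r τ ≤ lam2 * τ^2 := by
    intro τ hτ
    have h1 : 1 - r τ = ∫ s in (0:ℝ)..τ, -(deriv r s) := by
      rw [intervalIntegral.integral_neg, ftc τ]; ring
    have hint : IntervalIntegrable (fun s => -(deriv r s)) volume 0 τ :=
      (hcont'.neg).intervalIntegrable _ _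
    constructor
    · have hmono2 : (∫ s in (0:ℝ)..τ, lam2/2 * s) ≤ ∫ s in (0:ℝ)..τ, -(deriv r s) := by
        apply intervalIntegral.integral_mono_on hτ.1.le
          ((continuous_const.mul continuous_id).intervalIntegrable _ _) hint
        intro s hs
        rcases eq_or_lt_of_le hs.1 with h | h
        · rw [← h, hr'0]; simp
        · exact (hr'b s ⟨h, hs.2.trans hτ.2⟩).1
      have hval : (∫ s in (0:ℝ)..τ, lam2/2 * s) = lam2/4 * τ^2 := by
        rw [intervalIntegral.integral_const_mul]
        simp [integral_id]
        ring
      rw [h1]; linarith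
    · have hmono2 : (∫ s in (0:ℝ)..τ, -(deriv r s)) ≤ ∫ s in (0:ℝ)..τ, 2*lam2 * s := by
        apply intervalIntegral.integral_mono_on hτ.1.le hint
          ((continuous_const.mul continuous_id).intervalIntegrable _ _)
        intro s hs
        rcases eq_or_lt_of_le hs.1 with h | h
        · rw [← h, hr'0]; simp
        · exact (hr'b s ⟨h, hs.2.trans hτ.2⟩).2
      have hval : (∫ s in (0:ℝ)..τ, 2*lam2 * s) = lam2 * τ^2 := by
        rw [intervalIntegral.integral_const_mul]
        simp [integral_id]
        ring
      rw [h1]; linarith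
  have hr34 : ∀ τ ∈ Set.Ioc (0:ℝ) δ, 3/4 ≤ r τ := by
    intro τ hτ
    have h2 := (hrb τ hτ).2
    have hττ : τ^2 ≤ δ^2 := pow_le_pow_left₀ hτ.1.le hτ.2 2
    nlinarith
  have hPl : ∀ τ ∈ Set.Ioc (0:ℝ) δ, lam2/4 * τ^2 ≤ 1 - r τ^2 := by
    intro τ hτ
    have h34 := hr34 τ hτ
    have h1 := (hrb τ hτ).1
    have hlt : r τ < 1 := hrlt τ ⟨hτ.1, hτ.2.trans hδδ₀⟩
    nlinarith [mul_nonneg (by linarith : (0:ℝ) ≤ r τ) (by linarith : (0:ℝ) ≤ 1 - r τ)]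
  have hPu : ∀ τ ∈ Set.Ioc (0:ℝ) δ, 1 - r τ^2 ≤ 2*lam2 * τ^2 := by
    intro τ hτ
    have h34 := hr34 τ hτ
    have h2 := (hrb τ hτ).2
    have hlt : r τ < 1 := hrlt τ ⟨hτ.1, hτ.2.trans hδδ₀⟩
    have e : 1 - r τ^2 = (1 - r τ)*(1 + r τ) := by ring
    rw [e]
    have := mul_le_mul h2 (by linarith : 1 + r τ ≤ 2)
      (by linarith : (0:ℝ) ≤ 1 + r τ) (by positivity : (0:ℝ) ≤ lam2 * τ^2)
    linarith
  have hPpos : ∀ τ ∈ Set.Ioc (0:ℝ) δ, 0 < 1 - r τ^2 := fun τ hτ =>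
    lt_of_lt_of_le (mul_pos (by positivity) (pow_pos hτ.1 2)) (hPl τ hτ)
  set F : ℝ → ℝ := fun x => lam2 * (1 - r x^2) - (deriv r x)^2 with hFdef
  have hFderiv : ∀ x, HasDerivAt F (-2 * deriv r x * (g x - lam2*(1 - r x))) x := by
    intro x
    have h1 : HasDerivAt r (deriv r x) x := (hdiff x).hasDerivAt
    have h2 : HasDerivAt (deriv r) (deriv (deriv r) x) x := (hdiff' x).hasDerivAt
    have h3 : HasDerivAt (fun y => lam2 * (1 - r y^2))
        (lam2 * (-((2:ℕ) * r x ^ 1 * deriv r x))) x :=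
      ((h1.pow 2).const_sub 1).const_mul lam2
    have h4 : HasDerivAt (fun y => (deriv r y)^2)
        ((2:ℕ) * deriv r x ^ 1 * deriv (deriv r) x) x := h2.pow 2
    have h5 := h3.sub h4
    refine h5.congr_deriv ?_
    simp only [hgdef]
    push_cast
    ring
  have hFTC : ∀ τ : ℝ, F τ = ∫ s in (0:ℝ)..τ, -2 * deriv r s * (g s - lam2*(1 - r s)) := by
    intro τ
    have hci : Continuous fun s => -2 * deriv r s * (g s - lam2*(1 - r s)) := by
      apply Continuous.mul (continuous_const.mul hcont')
      exact hgc.sub (continuous_const.mul (continuous_const.sub hcr))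
    rw [intervalIntegral.integral_eq_sub_of_hasDerivAt (fun x _ => hFderiv x)
      (hci.intervalIntegrable _ _)]
    simp [hFdef, hr0, hr'0]
  set G : ℝ → ℝ := fun τ => ∫ s in (0:ℝ)..τ, s * g s with hGdef
  have hGcont : Continuous G :=
    intervalIntegral.continuous_primitive
      (fun a b => (continuous_id.mul hgc).intervalIntegrable a b) 0
  have hGnn : ∀ τ ∈ Set.Ioc (0:ℝ) δ, 0 ≤ G τ := by
    intro τ hτ
    apply intervalIntegral.integral_nonneg hτ.1.le
    intro s hs
    rcases eq_or_lt_of_le hs.1 with h | h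
    · rw [← h]; simp
    · exact mul_nonneg h.le (hgpos s ⟨h, hs.2.trans hτ.2⟩)
  have hFub : ∀ τ ∈ Set.Ioc (0:ℝ) δ, F τ ≤ 4*lam2 * G τ := by
    intro τ hτ
    rw [hFTC τ]
    have hci : Continuous fun s => -2 * deriv r s * (g s - lam2*(1 - r s)) := by
      apply Continuous.mul (continuous_const.mul hcont')
      exact hgc.sub (continuous_const.mul (continuous_const.sub hcr))
    have hmono2 : (∫ s in (0:ℝ)..τ, -2 * deriv r s * (g s - lam2*(1 - r s)))
        ≤ ∫ s in (0:ℝ)..τ, 4*lam2 * (s * g s) := by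
      apply intervalIntegral.integral_mono_on hτ.1.le (hci.intervalIntegrable _ _)
        ((continuous_const.mul (continuous_id.mul hgc)).intervalIntegrable _ _)
      intro s hs
      rcases eq_or_lt_of_le hs.1 with h | h
      · rw [← h, hr'0]; simp
      · have hsm : s ∈ Set.Ioc (0:ℝ) δ := ⟨h, hs.2.trans hτ.2⟩
        have hb := hr'b s hsm
        have hg0 := hgpos s hsm
        have h1r := (hrb s hsm).1
        have hnn : 0 ≤ lam2*(1 - r s) := mul_nonneg hlam2pos.le (le_trans (by positivity) h1r)
        have e1 : -2 * deriv r s * (g s - lam2*(1 - r s)) ≤ -2 * deriv r s * g s := by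
          apply mul_le_mul_of_nonneg_left (by linarith) (by linarith [hb.1])
        have e2 : -2 * deriv r s * g s ≤ 4*lam2*s * g s := by
          apply mul_le_mul_of_nonneg_right (by linarith [hb.2]) hg0
        calc -2 * deriv r s * (g s - lam2*(1 - r s)) ≤ -2 * deriv r s * g s := e1
          _ ≤ 4*lam2*s * g s := e2
          _ = 4*lam2 * (s * g s) := by ring
    rw [intervalIntegral.integral_const_mul] at hmono2
    exact hmono2
  have hFlb : ∀ τ ∈ Set.Ioc (0:ℝ) δ, lam2 * G τ - lam2^3 * τ^4 ≤ F τ := by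
    intro τ hτ
    rw [hFTC τ]
    have hci : Continuous fun s => -2 * deriv r s * (g s - lam2*(1 - r s)) := by
      apply Continuous.mul (continuous_const.mul hcont')
      exact hgc.sub (continuous_const.mul (continuous_const.sub hcr))
    have hint1 : IntervalIntegrable (fun s : ℝ => lam2 * (s * g s) - 4*lam2^3 * s^3)
        volume 0 τ :=
      ((continuous_const.mul (continuous_id.mul hgc)).sub
        (continuous_const.mul (continuous_pow 3))).intervalIntegrable _ _
    have hmono2 : (∫ s in (0:ℝ)..τ, (lam2 * (s * g s) - 4*lam2^3 * s^3))
        ≤ ∫ s in (0:ℝ)..τ, -2 * deriv r s * (g s - lam2*(1 - r s)) := by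
      apply intervalIntegral.integral_mono_on hτ.1.le hint1 (hci.intervalIntegrable _ _)
      intro s hs
      rcases eq_or_lt_of_le hs.1 with h | h
      · rw [← h, hr'0]; simp
      · have hsm : s ∈ Set.Ioc (0:ℝ) δ := ⟨h, hs.2.trans hτ.2⟩
        have hb := hr'b s hsm
        have hg0 := hgpos s hsm
        have h1r := (hrb s hsm).1
        have h1u := (hrb s hsm).2
        have e1 : lam2*s * g s ≤ -2 * deriv r s * g s := by
          apply mul_le_mul_of_nonneg_right (by linarith [hb.1]) hg0
        have hrs_nn : (0:ℝ) ≤ 1 - r s := le_trans (by positivity) h1r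
        have e2 : -2 * deriv r s * (lam2*(1 - r s)) ≤ 4*lam2*s * (lam2*(lam2*s^2)) := by
          apply mul_le_mul (by linarith [hb.2])
            (mul_le_mul_of_nonneg_left h1u hlam2pos.le)
            (mul_nonneg hlam2pos.le hrs_nn) (by positivity)
        have expand : -2 * deriv r s * (g s - lam2*(1 - r s))
            = -2 * deriv r s * g s - -2 * deriv r s * (lam2*(1 - r s)) := by ring
        rw [expand]
        linarith [e1, e2]
    have hval : (∫ s in (0:ℝ)..τ, (lam2 * (s * g s) - 4*lam2^3 * s^3))
        = lam2 * G τ - lam2^3 * τ^4 := by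
      have hint2 : IntervalIntegrable (fun s : ℝ => lam2 * (s * g s)) volume 0 τ :=
        ((continuous_const.mul (continuous_id.mul hgc))).intervalIntegrable _ _
      have hint3 : IntervalIntegrable (fun s : ℝ => 4*lam2^3 * s^3) volume 0 τ :=
        (continuous_const.mul (continuous_pow 3)).intervalIntegrable _ _
      rw [intervalIntegral.integral_sub hint2 hint3,
        intervalIntegral.integral_const_mul, intervalIntegral.integral_const_mul,
        integral_pow]
      simp only [hGdef]
      ring
    rw [← hval]
    exact hmono2
  -- cube-root scale constants
  set K₁ : ℝ := lam2/4 * Real.sqrt (lam2/4) with hK₁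
  set K₂ : ℝ := 2*lam2 * Real.sqrt (2*lam2) with hK₂
  have hK₁pos : 0 < K₁ := by rw [hK₁]; positivity
  have hK₂pos : 0 < K₂ := by rw [hK₂]; positivity
  have hD : ∀ τ ∈ Set.Ioc (0:ℝ) δ,
      K₁ * τ^3 ≤ (1 - r τ^2) * Real.sqrt (1 - r τ^2) ∧
      (1 - r τ^2) * Real.sqrt (1 - r τ^2) ≤ K₂ * τ^3 := by
    intro τ hτ
    have hPl' := hPl τ hτ
    have hPu' := hPu τ hτ
    have hPp := hPpos τ hτ
    have hτ0 := hτ.1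
    have hs1 : Real.sqrt (lam2/4 * τ^2) = Real.sqrt (lam2/4) * τ := by
      rw [Real.sqrt_mul (by positivity), Real.sqrt_sq hτ0.le]
    have hs2 : Real.sqrt (2*lam2 * τ^2) = Real.sqrt (2*lam2) * τ := by
      rw [Real.sqrt_mul (by positivity), Real.sqrt_sq hτ0.le]
    constructor
    · have hm := mul_le_mul hPl' (Real.sqrt_le_sqrt hPl') (Real.sqrt_nonneg _) hPp.le
      rw [hs1] at hm
      calc K₁ * τ^3 = (lam2/4 * τ^2) * (Real.sqrt (lam2/4) * τ) := by rw [hK₁]; ring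
        _ ≤ _ := hm
    · have hm := mul_le_mul hPu' (Real.sqrt_le_sqrt hPu') (Real.sqrt_nonneg _) (by positivity)
      rw [hs2] at hm
      calc (1 - r τ^2) * Real.sqrt (1 - r τ^2) ≤ (2*lam2*τ^2) * (Real.sqrt (2*lam2) * τ) := hm
        _ = K₂ * τ^3 := by rw [hK₂]; ring
  have hDpos : ∀ τ ∈ Set.Ioc (0:ℝ) δ, 0 < (1 - r τ^2) * Real.sqrt (1 - r τ^2) :=
    fun τ hτ => mul_pos (hPpos τ hτ) (Real.sqrt_pos.2 (hPpos τ hτ))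
  -- identification of the second integrand
  have hf2 : ∀ τ ∈ Set.Ioc (0:ℝ) δ,
      (-(deriv (deriv r) 0) - (deriv r τ)^2/(1 - r τ^2)) / Real.sqrt (1 - r τ^2)
        = F τ / ((1 - r τ^2) * Real.sqrt (1 - r τ^2)) := by
    intro τ hτ
    have hPp := (hPpos τ hτ).ne'
    have e : -(deriv (deriv r) 0) - (deriv r τ)^2/(1 - r τ^2) = F τ / (1 - r τ^2) := by
      rw [hlam2, neg_neg, hFdef]
      field_simp
    rw [e, div_div]
  -- bounds for the second integrand in terms of h = G/τ³
  have hub2 : ∀ τ ∈ Set.Ioc (0:ℝ) δ,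
      F τ / ((1 - r τ^2) * Real.sqrt (1 - r τ^2)) ≤ (4*lam2/K₁) * (G τ / τ^3) := by
    intro τ hτ
    have hτ3 : (0:ℝ) < τ^3 := pow_pos hτ.1 3
    calc F τ / ((1 - r τ^2) * Real.sqrt (1 - r τ^2))
        ≤ (4*lam2 * G τ) / (K₁ * τ^3) :=
          div_le_div₀ (mul_nonneg (by positivity) (hGnn τ hτ)) (hFub τ hτ)
            (by positivity) (hD τ hτ).1
      _ = (4*lam2/K₁) * (G τ / τ^3) := by field_simp; try ring
  have hlb2 : ∀ τ ∈ Set.Ioc (0:ℝ) δ,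
      (lam2/K₂) * (G τ / τ^3) - (lam2^3/K₁)*δ
        ≤ F τ / ((1 - r τ^2) * Real.sqrt (1 - r τ^2)) := by
    intro τ hτ
    have hτ3 : (0:ℝ) < τ^3 := pow_pos hτ.1 3
    have hτ0 := hτ.1
    have hDp := hDpos τ hτ
    have h0 : (lam2 * G τ - lam2^3 * τ^4) / ((1 - r τ^2) * Real.sqrt (1 - r τ^2))
        ≤ F τ / ((1 - r τ^2) * Real.sqrt (1 - r τ^2)) :=
      (div_le_div_iff_of_pos_right hDp).2 (hFlb τ hτ)
    have hsub : (lam2 * G τ - lam2^3 * τ^4) / ((1 - r τ^2) * Real.sqrt (1 - r τ^2))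
        = lam2 * G τ / ((1 - r τ^2) * Real.sqrt (1 - r τ^2))
          - lam2^3 * τ^4 / ((1 - r τ^2) * Real.sqrt (1 - r τ^2)) := sub_div _ _ _
    have h1 : lam2 * G τ / (K₂ * τ^3)
        ≤ lam2 * G τ / ((1 - r τ^2) * Real.sqrt (1 - r τ^2)) :=
      div_le_div₀ (mul_nonneg hlam2pos.le (hGnn τ hτ)) (le_refl _) hDp (hD τ hτ).2
    have h2 : lam2^3 * τ^4 / ((1 - r τ^2) * Real.sqrt (1 - r τ^2))
        ≤ lam2^3 * τ^4 / (K₁ * τ^3) :=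
      div_le_div₀ (by positivity) (le_refl _) (by positivity) (hD τ hτ).1
    have e1 : lam2 * G τ / (K₂ * τ^3) = (lam2/K₂) * (G τ / τ^3) := by
      field_simp; try ring
    have e2 : lam2^3 * τ^4 / (K₁ * τ^3) = (lam2^3/K₁) * τ := by
      field_simp; try ring
    have e3 : (lam2^3/K₁) * τ ≤ (lam2^3/K₁) * δ :=
      mul_le_mul_of_nonneg_left hτ.2 (by positivity)
    rw [e1] at h1
    rw [e2] at h2
    linarith
  -- measurability
  have hmeas_f2 : AEStronglyMeasurable
      (fun τ => (-(deriv (deriv r) 0) - (deriv r τ)^2/(1 - (r τ)^2))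
        / Real.sqrt (1 - (r τ)^2)) (volume.restrict (Set.Ioc 0 δ)) :=
    (((measurable_const.sub ((hcont'.measurable.pow_const 2).div
      (measurable_const.sub (hcr.measurable.pow_const 2)))).div
      (measurable_const.sub (hcr.measurable.pow_const 2)).sqrt)).aestronglyMeasurable
  have hmeas_h : AEStronglyMeasurable (fun τ => G τ / τ^3)
      (volume.restrict (Set.Ioc 0 δ)) :=
    (hGcont.measurable.div (measurable_id.pow_const 3)).aestronglyMeasurable
  -- second integrand ↔ G/τ³
  have keyB : IntegrableOn
      (fun τ => (-(deriv (deriv r) 0) - (deriv r τ)^2/(1 - (r τ)^2))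
        / Real.sqrt (1 - (r τ)^2)) (Set.Ioc 0 δ) volume
      ↔ IntegrableOn (fun τ => G τ / τ^3) (Set.Ioc 0 δ) volume := by
    apply integrableOn_iff_of_bounds (c₁ := lam2/K₂) (c₂ := 4*lam2/K₁)
      (C := (lam2^3/K₁)*δ) hδpos (by positivity) (by positivity) (by positivity)
      hmeas_f2 hmeas_h
    · exact fun τ hτ => div_nonneg (hGnn τ hτ) (pow_pos hτ.1 3).le
    · intro τ hτ
      rw [hf2 τ hτ]
      exact hub2 τ hτ
    · intro τ hτ
      rw [hf2 τ hτ]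
      exact hlb2 τ hτ
  -- first integrand is g/τ
  have goal_eq1 : (fun τ => (deriv (deriv r) τ - deriv (deriv r) 0)/τ)
      = fun τ => g τ / τ := by
    funext τ
    simp only [hgdef, hlam2, sub_neg_eq_add]
  have hA : IntegrableOn (fun τ => (deriv (deriv r) τ - deriv (deriv r) 0)/τ)
      (Set.Ioc 0 δ) volume
      ↔ (∫⁻ τ in Set.Ioc (0:ℝ) δ, ENNReal.ofReal (g τ / τ)) ≠ ⊤ := by
    rw [goal_eq1]
    exact (lintegral_ofReal_ne_top_iff_integrable
      ((hgc.measurable.div measurable_id).aestronglyMeasurable)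
      ((ae_restrict_iff' measurableSet_Ioc).2 (Filter.Eventually.of_forall
        fun τ hτ => div_nonneg (hgpos τ hτ) hτ.1.le))).symm
  have hH : IntegrableOn (fun τ => G τ / τ^3) (Set.Ioc 0 δ) volume
      ↔ (∫⁻ τ in Set.Ioc (0:ℝ) δ, ENNReal.ofReal (G τ / τ^3)) ≠ ⊤ :=
    (lintegral_ofReal_ne_top_iff_integrable hmeas_h
      ((ae_restrict_iff' measurableSet_Ioc).2 (Filter.Eventually.of_forall
        fun τ hτ => div_nonneg (hGnn τ hτ) (pow_pos hτ.1 3).le))).symm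
  have hTon : (∫⁻ τ in Set.Ioc (0:ℝ) δ, ENNReal.ofReal (G τ / τ^3)) ≠ ⊤
      ↔ (∫⁻ τ in Set.Ioc (0:ℝ) δ, ENNReal.ofReal (g τ / τ)) ≠ ⊤ := by
    simp only [hGdef]
    exact tonelli_core g hgc δ lam2 hδpos hgpos hgM
  rw [hA, keyB, hH, hTon]
end

section
/- Quantitative nondegeneracy of stationary Gaussian covariances: let X be a centered stationary Gaussian field on ℝ^d with continuous covariance r whose spectral measure is not concentrated on a set of Lebesgue measure zero, and let T̄ ⊂ ℝ^d be compact. Then there exists C > 0 such that for all s, t ∈ T̄, r²(0) - r²(s - t) ≥ C ‖s - t‖². -/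
open MeasureTheory
open scoped RealInnerProductSpace

set_option maxHeartbeats 1000000
open scoped Pointwise


lemma stmt17_level_null {d : ℕ} {τ : EuclideanSpace ℝ (Fin d)} (hτ : τ ≠ 0) (a : ℝ) :
    volume {l : EuclideanSpace ℝ (Fin d) | ⟪τ, l⟫ = a} = 0 := by
  have hττ : ⟪τ, τ⟫ ≠ 0 := inner_self_ne_zero.mpr hτ
  set c : ℝ := a / ⟪τ, τ⟫ with hc
  have hset : {l : EuclideanSpace ℝ (Fin d) | ⟪τ, l⟫ = a}
      = (c • τ) +ᵥ ((LinearMap.ker ((innerSL ℝ τ : EuclideanSpace ℝ (Fin d) →L[ℝ] ℝ) : EuclideanSpace ℝ (Fin d) →ₗ[ℝ] ℝ) : Submodule ℝ _) : Set (EuclideanSpace ℝ (Fin d))) := by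
    ext l
    simp only [Set.mem_setOf_eq, Set.mem_vadd_set, SetLike.mem_coe, LinearMap.mem_ker,
      ContinuousLinearMap.coe_coe, innerSL_apply_apply]
    constructor
    · intro h
      refine ⟨l - c • τ, ?_, by rw [vadd_eq_add]; abel⟩
      rw [inner_sub_right, inner_smul_right, h, hc, div_mul_cancel₀ _ hττ, sub_self]
    · rintro ⟨x, hx, rfl⟩
      rw [vadd_eq_add, inner_add_right, inner_smul_right, hx, hc, div_mul_cancel₀ _ hττ, add_zero]
  rw [hset, measure_vadd]
  refine Measure.addHaar_submodule _ _ ?_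
  intro h
  have : τ ∈ LinearMap.ker ((innerSL ℝ τ : EuclideanSpace ℝ (Fin d) →L[ℝ] ℝ) : EuclideanSpace ℝ (Fin d) →ₗ[ℝ] ℝ) := h ▸ Submodule.mem_top
  simp only [LinearMap.mem_ker, ContinuousLinearMap.coe_coe, innerSL_apply_apply] at this
  exact hττ this

lemma stmt17_sin_null {d : ℕ} {τ : EuclideanSpace ℝ (Fin d)} (hτ : τ ≠ 0) :
    volume {l : EuclideanSpace ℝ (Fin d) | Real.sin ⟪τ, l⟫ = 0} = 0 := by
  have h1 : {l : EuclideanSpace ℝ (Fin d) | Real.sin ⟪τ, l⟫ = 0}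
      ⊆ ⋃ n : ℤ, {l | ⟪τ, l⟫ = (n : ℝ) * Real.pi} := by
    intro l hl
    rw [Set.mem_setOf_eq, Real.sin_eq_zero_iff] at hl
    obtain ⟨n, hn⟩ := hl
    exact Set.mem_iUnion.mpr ⟨n, hn.symm⟩
  exact measure_mono_null h1 (measure_iUnion_null fun n => stmt17_level_null hτ _)

lemma stmt17_integrable {d : ℕ} {F : Measure (EuclideanSpace ℝ (Fin d))} [IsFiniteMeasure F]
    {f : EuclideanSpace ℝ (Fin d) → ℝ} (hf : Continuous f) (B : ℝ) (hb : ∀ x, |f x| ≤ B) :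
    Integrable f F :=
  Integrable.mono' (integrable_const B) hf.aestronglyMeasurable
    (Filter.Eventually.of_forall fun x => by simpa [Real.norm_eq_abs] using hb x)

lemma stmt17_pos {d : ℕ} {F : Measure (EuclideanSpace ℝ (Fin d))} [IsFiniteMeasure F]
    (hF : ¬ ∃ s : Set (EuclideanSpace ℝ (Fin d)),
      MeasurableSet s ∧ volume s = 0 ∧ F sᶜ = 0)
    {τ : EuclideanSpace ℝ (Fin d)} (hτ : τ ≠ 0)
    {f : EuclideanSpace ℝ (Fin d) → ℝ} (hint : Integrable f F)
    (hnn : ∀ l, 0 ≤ f l) (hpos : ∀ l, Real.sin ⟪τ, l⟫ ≠ 0 → 0 < f l) :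
    0 < ∫ l, f l ∂F := by
  rw [integral_pos_iff_support_of_nonneg hnn hint]
  have hmeas : MeasurableSet {l : EuclideanSpace ℝ (Fin d) | Real.sin ⟪τ, l⟫ = 0} :=
    measurableSet_eq_fun
      (Real.continuous_sin.comp (continuous_const.inner continuous_id)).measurable
      measurable_const
  have hFc : F {l : EuclideanSpace ℝ (Fin d) | Real.sin ⟪τ, l⟫ = 0}ᶜ ≠ 0 := by
    intro h
    exact hF ⟨_, hmeas, stmt17_sin_null hτ, h⟩
  refine lt_of_lt_of_le (pos_iff_ne_zero.mpr hFc) (measure_mono ?_)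
  intro l hl
  exact (hpos l hl).ne'


/-- Quantitative nondegeneracy of stationary Gaussian covariances: if
`r(τ) = ∫ cos⟨τ,λ⟩ dF(λ)` is the covariance of a centered stationary Gaussian field on
`ℝ^d` whose (finite) spectral measure `F` is not concentrated on a Lebesgue-null set, then
on every compact `K` there is `C > 0` with `r(0)² - r(s-t)² ≥ C ‖s-t‖²` for `s, t ∈ K`. -/
theorem stmt_17 (d : ℕ) (r : EuclideanSpace ℝ (Fin d) → ℝ)
    (F : Measure (EuclideanSpace ℝ (Fin d))) [IsFiniteMeasure F]
    (hr : ∀ τ, r τ = ∫ l, Real.cos ⟪τ, l⟫ ∂F)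
    (hF : ¬ ∃ s : Set (EuclideanSpace ℝ (Fin d)),
      MeasurableSet s ∧ volume s = 0 ∧ F sᶜ = 0)
    (K : Set (EuclideanSpace ℝ (Fin d))) (hK : IsCompact K) :
    ∃ C > 0, ∀ s ∈ K, ∀ t ∈ K, C * ‖s - t‖ ^ 2 ≤ r 0 ^ 2 - r (s - t) ^ 2 := by

  classical
  rcases Nat.eq_zero_or_pos d with hd | hd
  · subst hd
    refine ⟨1, one_pos, fun s _ t _ => ?_⟩
    have hst : s - t = (0 : EuclideanSpace ℝ (Fin 0)) := by
      ext i; exact absurd i.2 (by omega)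
    rw [hst]
    simp
  -- basic facts
  have hFuniv : F Set.univ ≠ 0 := by
    intro h
    exact hF ⟨∅, MeasurableSet.empty, measure_empty, by simpa using h⟩
  have hr0 : r 0 = (F Set.univ).toReal := by
    rw [hr 0]
    simp [integral_const]
    rfl
  have hr0pos : 0 < r 0 := by
    rw [hr0]
    exact ENNReal.toReal_pos hFuniv (measure_ne_top F _)
  have hcont_cos : ∀ τ : EuclideanSpace ℝ (Fin d),
      Continuous fun l : EuclideanSpace ℝ (Fin d) => Real.cos ⟪τ, l⟫ := fun τ =>
    Real.continuous_cos.comp (continuous_const.inner continuous_id)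
  have hint_cos : ∀ τ, Integrable (fun l => Real.cos ⟪τ, l⟫) F := fun τ =>
    stmt17_integrable (hcont_cos τ) 1 fun l => Real.abs_cos_le_one _
  have hrc : Continuous r := by
    have hre : r = fun τ => ∫ l, Real.cos ⟪τ, l⟫ ∂F := funext hr
    rw [hre]
    apply continuous_of_dominated (bound := fun _ => (1:ℝ))
    · exact fun τ => (hcont_cos τ).aestronglyMeasurable
    · exact fun τ => Filter.Eventually.of_forall fun l => by
        simpa [Real.norm_eq_abs] using Real.abs_cos_le_one ⟪τ, l⟫
    · exact integrable_const 1
    · exact Filter.Eventually.of_forall fun l =>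
        Real.continuous_cos.comp (continuous_id.inner continuous_const)
  have hsub : ∀ τ : EuclideanSpace ℝ (Fin d),
      r 0 - r τ = ∫ l, (1 - Real.cos ⟪τ, l⟫) ∂F := by
    intro τ
    rw [integral_sub (integrable_const 1) (hint_cos τ), integral_const, hr τ, hr0]
    simp
    rfl
  have hadd : ∀ τ : EuclideanSpace ℝ (Fin d),
      r 0 + r τ = ∫ l, (1 + Real.cos ⟪τ, l⟫) ∂F := by
    intro τ
    rw [integral_add (integrable_const 1) (hint_cos τ), integral_const, hr τ, hr0]
    simp
    rfl
  -- strict positivity away from 0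
  have hsin_ne : ∀ x : ℝ, Real.sin x ≠ 0 → Real.cos x < 1 ∧ -1 < Real.cos x := by
    intro x hx
    have h1 := Real.sin_sq_add_cos_sq x
    have h2 : 0 < Real.sin x ^ 2 :=
      lt_of_le_of_ne (sq_nonneg _) (Ne.symm (pow_ne_zero 2 hx))
    constructor <;> nlinarith
  have hsubpos : ∀ τ : EuclideanSpace ℝ (Fin d), τ ≠ 0 → 0 < r 0 - r τ := by
    intro τ hτ
    rw [hsub τ]
    refine stmt17_pos hF hτ ((integrable_const 1).sub (hint_cos τ))
      (fun l => by nlinarith [Real.cos_le_one ⟪τ, l⟫]) (fun l hl => ?_)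
    have := (hsin_ne _ hl).1
    linarith
  have haddpos : ∀ τ : EuclideanSpace ℝ (Fin d), τ ≠ 0 → 0 < r 0 + r τ := by
    intro τ hτ
    rw [hadd τ]
    refine stmt17_pos hF hτ ((integrable_const 1).add (hint_cos τ))
      (fun l => by nlinarith [Real.neg_one_le_cos ⟪τ, l⟫]) (fun l hl => ?_)
    have := (hsin_ne _ hl).2
    linarith
  -- the quadratic form Q
  set Q : EuclideanSpace ℝ (Fin d) → ℝ :=
    fun u => ∫ l, ⟪u, l⟫ ^ 2 / (1 + ‖l‖ ^ 2) ∂F with hQdef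
  have hQptb : ∀ u l : EuclideanSpace ℝ (Fin d), ⟪u, l⟫ ^ 2 / (1 + ‖l‖ ^ 2) ≤ ‖u‖ ^ 2 := by
    intro u l
    have h1 : |⟪u, l⟫| ≤ ‖u‖ * ‖l‖ := abs_real_inner_le_norm u l
    have h3 : (0:ℝ) < 1 + ‖l‖ ^ 2 := by positivity
    rw [div_le_iff₀ h3]
    nlinarith [norm_nonneg u, norm_nonneg l, sq_abs ⟪u, l⟫, abs_nonneg ⟪u, l⟫,
      sq_nonneg (‖u‖ * ‖l‖), sq_nonneg (‖u‖ * ‖l‖ - |⟪u, l⟫|)]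
  have hQcontl : ∀ u : EuclideanSpace ℝ (Fin d),
      Continuous fun l : EuclideanSpace ℝ (Fin d) => ⟪u, l⟫ ^ 2 / (1 + ‖l‖ ^ 2) := by
    intro u
    refine Continuous.div ((continuous_const.inner continuous_id).pow 2)
      (continuous_const.add (continuous_norm.pow 2)) (fun l => by positivity)
  have hQint : ∀ u : EuclideanSpace ℝ (Fin d),
      Integrable (fun l => ⟪u, l⟫ ^ 2 / (1 + ‖l‖ ^ 2)) F := fun u =>
    stmt17_integrable (hQcontl u) (‖u‖ ^ 2) fun l => by
      rw [abs_of_nonneg (by positivity)]; exact hQptb u l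
  have hQpos : ∀ u : EuclideanSpace ℝ (Fin d), u ≠ 0 → 0 < Q u := by
    intro u hu
    refine stmt17_pos hF hu (hQint u) (fun l => by positivity) (fun l hl => ?_)
    have h0 : ⟪u, l⟫ ≠ 0 := fun h => hl (by rw [h, Real.sin_zero])
    positivity
  -- minimum over the sphere
  have hi : Nonempty (Fin d) := ⟨⟨0, hd⟩⟩
  obtain ⟨i⟩ := hi
  have hsphne : (Metric.sphere (0 : EuclideanSpace ℝ (Fin d)) 1).Nonempty := by
    refine ⟨EuclideanSpace.single i (1:ℝ), ?_⟩
    simp [EuclideanSpace.norm_single]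
  have hQcontOn : ContinuousOn Q (Metric.sphere (0 : EuclideanSpace ℝ (Fin d)) 1) := by
    rw [continuousOn_iff_continuous_restrict]
    show Continuous fun u : Metric.sphere (0 : EuclideanSpace ℝ (Fin d)) 1 =>
      ∫ l, ⟪(u : EuclideanSpace ℝ (Fin d)), l⟫ ^ 2 / (1 + ‖l‖ ^ 2) ∂F
    apply continuous_of_dominated (bound := fun _ => (1:ℝ))
    · exact fun u => (hQcontl u).aestronglyMeasurable
    · intro u
      refine Filter.Eventually.of_forall fun l => ?_
      rw [Real.norm_eq_abs, abs_of_nonneg (by positivity)]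
      have := hQptb (u : EuclideanSpace ℝ (Fin d)) l
      have hn : ‖(u : EuclideanSpace ℝ (Fin d))‖ = 1 := by
        have := u.2
        simpa [mem_sphere_zero_iff_norm] using this
      rw [hn] at this
      simpa using this
    · exact integrable_const 1
    · exact Filter.Eventually.of_forall fun l =>
        ((continuous_subtype_val.inner continuous_const).pow 2).div_const _
  obtain ⟨u₀, hu₀s, hu₀min'⟩ :=
    (isCompact_sphere (0 : EuclideanSpace ℝ (Fin d)) 1).exists_isMinOn hsphne hQcontOn
  have hu₀min := isMinOn_iff.mp hu₀min'
  set m : ℝ := Q u₀ with hmdef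
  have hm : 0 < m := by
    refine hQpos u₀ ?_
    have : ‖u₀‖ = 1 := by simpa [mem_sphere_zero_iff_norm] using hu₀s
    intro h; rw [h] at this; simp at this
  -- tail cutoff
  obtain ⟨R, hR0, hRtail⟩ : ∃ R : ℝ, 0 ≤ R ∧ (F {l : EuclideanSpace ℝ (Fin d) | R < ‖l‖}).toReal ≤ m / 2 := by
    have hAnti : Antitone fun n : ℕ => {l : EuclideanSpace ℝ (Fin d) | (n : ℝ) < ‖l‖} := by
      intro a b hab l hl
      simp only [Set.mem_setOf_eq] at hl ⊢
      exact lt_of_le_of_lt (by exact_mod_cast hab) hl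
    have hmeas : ∀ n : ℕ, NullMeasurableSet {l : EuclideanSpace ℝ (Fin d) | (n : ℝ) < ‖l‖} F :=
      fun n => (measurableSet_lt measurable_const measurable_norm).nullMeasurableSet
    have hiInter : (⋂ n : ℕ, {l : EuclideanSpace ℝ (Fin d) | (n : ℝ) < ‖l‖}) = ∅ := by
      ext l
      simp only [Set.mem_iInter, Set.mem_empty_iff_false, iff_false, not_forall,
        Set.mem_setOf_eq, not_lt]
      obtain ⟨n, hn⟩ := exists_nat_gt ‖l‖
      exact ⟨n, hn.le⟩
    have ht := tendsto_measure_iInter_atTop hmeas hAnti ⟨0, measure_ne_top F _⟩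
    rw [hiInter, measure_empty] at ht
    have hε : (0 : ENNReal) < ENNReal.ofReal (m / 2) := by
      rw [ENNReal.ofReal_pos]; linarith
    obtain ⟨n, hn⟩ := (ht.eventually_lt_const hε).exists
    exact ⟨n, Nat.cast_nonneg n, ENNReal.toReal_le_of_le_ofReal (by linarith) hn.le⟩
  set B : Set (EuclideanSpace ℝ (Fin d)) := {l | ‖l‖ ≤ R} with hBdef
  have hBmeas : MeasurableSet B := measurableSet_le measurable_norm measurable_const
  have hBc : Bᶜ = {l : EuclideanSpace ℝ (Fin d) | R < ‖l‖} := by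
    ext l; simp [hBdef, not_le]
  -- cos quadratic bound
  have hcosb : ∀ x : ℝ, |x| ≤ 1 → x ^ 2 / 4 ≤ 1 - Real.cos x := by
    intro x hx
    have h := abs_le.mp (Real.cos_bound hx)
    have h2 : x ^ 2 ≤ 1 := by nlinarith [sq_abs x, abs_nonneg x]
    have h4 : |x| ^ 4 = x ^ 2 * x ^ 2 := by
      rw [show (4:ℕ) = 2 * 2 from rfl, pow_mul, sq_abs]; ring
    nlinarith [sq_nonneg x]
  -- local quadratic bound
  have hlocal : ∀ τ : EuclideanSpace ℝ (Fin d), ‖τ‖ ≤ 1 / (R + 1) →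
      m / 8 * ‖τ‖ ^ 2 ≤ r 0 - r τ := by
    intro τ hτR
    rcases eq_or_ne τ 0 with rfl | hτ0
    · simp
    have hτn : 0 < ‖τ‖ := norm_pos_iff.mpr hτ0
    set u : EuclideanSpace ℝ (Fin d) := ‖τ‖⁻¹ • τ with hu
    have hunorm : ‖u‖ = 1 := by
      rw [hu, norm_smul, norm_inv, norm_norm, inv_mul_cancel₀ hτn.ne']
    have hτu : τ = ‖τ‖ • u := by
      rw [hu, smul_smul, mul_inv_cancel₀ hτn.ne', one_smul]
    have huQ : m ≤ Q u := hu₀min u (by simpa [mem_sphere_zero_iff_norm] using hunorm)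
    have hinner : ∀ l, ⟪τ, l⟫ = ‖τ‖ * ⟪u, l⟫ := by
      intro l
      conv_lhs => rw [hτu]
      rw [real_inner_smul_left]
    have hQτ : Q τ = ‖τ‖ ^ 2 * Q u := by
      rw [hQdef]
      simp only
      rw [← integral_const_mul]
      congr 1
      funext l
      rw [hinner l]
      ring
    -- tail estimate
    have htb : ∫ l in Bᶜ, ⟪τ, l⟫ ^ 2 / (1 + ‖l‖ ^ 2) ∂F ≤ ‖τ‖ ^ 2 * (m / 2) := by
      have h1 : ∫ l in Bᶜ, ⟪τ, l⟫ ^ 2 / (1 + ‖l‖ ^ 2) ∂F ≤ ∫ _ in Bᶜ, ‖τ‖ ^ 2 ∂F := by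
        refine setIntegral_mono_on ((hQint τ).integrableOn)
          ((integrableOn_const_iff).mpr (Or.inr (measure_lt_top _ _))) hBmeas.compl
          (fun l _ => hQptb τ l)
      have h2 : ∫ _ in Bᶜ, ‖τ‖ ^ 2 ∂F = (F Bᶜ).toReal * ‖τ‖ ^ 2 := by
        rw [setIntegral_const, smul_eq_mul]
        rfl
      rw [h2] at h1
      refine le_trans h1 ?_
      rw [hBc]
      nlinarith [sq_nonneg ‖τ‖, hRtail, ENNReal.toReal_nonneg (a := F {l : EuclideanSpace ℝ (Fin d) | R < ‖l‖})]
    -- main set estimate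
    have hQsplit : ∫ l in B, ⟪τ, l⟫ ^ 2 / (1 + ‖l‖ ^ 2) ∂F
        + ∫ l in Bᶜ, ⟪τ, l⟫ ^ 2 / (1 + ‖l‖ ^ 2) ∂F = Q τ :=
      integral_add_compl hBmeas (hQint τ)
    have hQB : ‖τ‖ ^ 2 * (m / 2) ≤ ∫ l in B, ⟪τ, l⟫ ^ 2 / (1 + ‖l‖ ^ 2) ∂F := by
      have : ‖τ‖ ^ 2 * m ≤ Q τ := by
        rw [hQτ]
        nlinarith [sq_nonneg ‖τ‖]
      linarith
    -- pointwise on B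
    have hptw : ∀ l ∈ B, (1/4) * (⟪τ, l⟫ ^ 2 / (1 + ‖l‖ ^ 2)) ≤ 1 - Real.cos ⟪τ, l⟫ := by
      intro l hl
      have hlR : ‖l‖ ≤ R := hl
      have habs : |⟪τ, l⟫| ≤ 1 := by
        refine le_trans (abs_real_inner_le_norm τ l) ?_
        have h1 : ‖τ‖ * ‖l‖ ≤ (1 / (R + 1)) * R := by
          apply mul_le_mul hτR hlR (norm_nonneg l) (by positivity)
        refine le_trans h1 ?_
        rw [div_mul_eq_mul_div, div_le_one (by linarith)]
        linarith
      have h1 := hcosb _ habs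
      have h3 : (0:ℝ) < 1 + ‖l‖ ^ 2 := by positivity
      have h4 : ⟪τ, l⟫ ^ 2 / (1 + ‖l‖ ^ 2) ≤ ⟪τ, l⟫ ^ 2 := by
        rw [div_le_iff₀ h3]
        nlinarith [sq_nonneg ⟪τ, l⟫, sq_nonneg ‖l‖]
      linarith
    have hmono : ∫ l in B, (1/4) * (⟪τ, l⟫ ^ 2 / (1 + ‖l‖ ^ 2)) ∂F
        ≤ ∫ l in B, (1 - Real.cos ⟪τ, l⟫) ∂F := by
      refine setIntegral_mono_on (((hQint τ).const_mul _).integrableOn)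
        (((integrable_const 1).sub (hint_cos τ)).integrableOn) hBmeas hptw
    have hpull : ∫ l in B, (1/4) * (⟪τ, l⟫ ^ 2 / (1 + ‖l‖ ^ 2)) ∂F
        = (1/4) * ∫ l in B, ⟪τ, l⟫ ^ 2 / (1 + ‖l‖ ^ 2) ∂F := integral_const_mul _ _
    have hfull : ∫ l in B, (1 - Real.cos ⟪τ, l⟫) ∂F ≤ ∫ l, (1 - Real.cos ⟪τ, l⟫) ∂F := by
      refine setIntegral_le_integral ((integrable_const 1).sub (hint_cos τ))
        (Filter.Eventually.of_forall fun l => ?_)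
      simp only [Pi.zero_apply]
      nlinarith [Real.cos_le_one ⟪τ, l⟫]
    rw [hsub τ]
    calc m / 8 * ‖τ‖ ^ 2 = (1/4) * (‖τ‖ ^ 2 * (m / 2)) := by ring
    _ ≤ (1/4) * ∫ l in B, ⟪τ, l⟫ ^ 2 / (1 + ‖l‖ ^ 2) ∂F := by linarith
    _ ≤ ∫ l in B, (1 - Real.cos ⟪τ, l⟫) ∂F := by rw [← hpull]; exact hmono
    _ ≤ ∫ l, (1 - Real.cos ⟪τ, l⟫) ∂F := hfull
  -- neighborhood where r is positive
  obtain ⟨ε₁, hε₁, hball⟩ : ∃ ε₁ > 0, ∀ τ : EuclideanSpace ℝ (Fin d), ‖τ‖ < ε₁ → 0 < r τ := by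
    have hop : IsOpen (r ⁻¹' Set.Ioi 0) := isOpen_Ioi.preimage hrc
    have h0 : (0 : EuclideanSpace ℝ (Fin d)) ∈ r ⁻¹' Set.Ioi 0 := hr0pos
    obtain ⟨ε₁, hε₁, hb⟩ := Metric.isOpen_iff.mp hop 0 h0
    exact ⟨ε₁, hε₁, fun τ hτ => hb (by simpa [Metric.mem_ball, dist_zero_right] using hτ)⟩
  set ε₂ : ℝ := min (1 / (R + 1)) (ε₁ / 2) with hε₂def
  have hε₂pos : 0 < ε₂ := lt_min (by positivity) (by linarith)
  have hglocal : ∀ τ : EuclideanSpace ℝ (Fin d), ‖τ‖ ≤ ε₂ →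
      r 0 * (m / 8) * ‖τ‖ ^ 2 ≤ r 0 ^ 2 - r τ ^ 2 := by
    intro τ hτ
    have h1 : m / 8 * ‖τ‖ ^ 2 ≤ r 0 - r τ :=
      hlocal τ (le_trans hτ (min_le_left _ _))
    have h2 : 0 < r τ := hball τ (by
      have := le_trans hτ (min_le_right _ _)
      linarith)
    have h3 : (0:ℝ) ≤ m / 8 * ‖τ‖ ^ 2 * r τ :=
      mul_nonneg (mul_nonneg (by linarith) (sq_nonneg _)) h2.le
    nlinarith [mul_le_mul_of_nonneg_right h1 (by linarith : (0:ℝ) ≤ r 0 + r τ)]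
  -- global part
  set D : Set (EuclideanSpace ℝ (Fin d)) := (fun p : _ × _ => p.1 - p.2) '' (K ×ˢ K) with hDdef
  have hD : IsCompact D := (hK.prod hK).image (continuous_fst.sub continuous_snd)
  obtain ⟨MB, hMB⟩ := hD.isBounded.exists_norm_le
  set MB' : ℝ := max MB 1 with hMB'def
  have hMB'pos : (0:ℝ) < MB' := lt_of_lt_of_le one_pos (le_max_right _ _)
  have key : ∃ C > 0, ∀ τ ∈ D, C * ‖τ‖ ^ 2 ≤ r 0 ^ 2 - r τ ^ 2 := by
    set D' : Set (EuclideanSpace ℝ (Fin d)) := D ∩ {τ | ε₂ ≤ ‖τ‖} with hD'def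
    have hD'c : IsCompact D' :=
      hD.inter_right (isClosed_le continuous_const continuous_norm)
    have hgcont : Continuous fun τ : EuclideanSpace ℝ (Fin d) => r 0 ^ 2 - r τ ^ 2 :=
      continuous_const.sub (hrc.pow 2)
    rcases D'.eq_empty_or_nonempty with hD'e | hD'ne
    · refine ⟨r 0 * (m / 8), by positivity, fun τ hτD => ?_⟩
      refine hglocal τ ?_
      by_contra hc
      push_neg at hc
      exact Set.eq_empty_iff_forall_notMem.mp hD'e τ ⟨hτD, hc.le⟩
    · obtain ⟨τ₀, hτ₀D', hτ₀min'⟩ := hD'c.exists_isMinOn hD'ne hgcont.continuousOn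
      have hτ₀min := isMinOn_iff.mp hτ₀min'
      have hτ₀ne : τ₀ ≠ 0 := by
        intro h
        have := hτ₀D'.2
        rw [h] at this
        simp only [Set.mem_setOf_eq, norm_zero] at this
        linarith
      have hτ₀pos : 0 < r 0 ^ 2 - r τ₀ ^ 2 := by
        have hA := hsubpos τ₀ hτ₀ne
        have hB2 := haddpos τ₀ hτ₀ne
        nlinarith
      refine ⟨min (r 0 * (m / 8)) ((r 0 ^ 2 - r τ₀ ^ 2) / MB' ^ 2),
        lt_min (by positivity) (by positivity), fun τ hτD => ?_⟩
      rcases le_or_gt ‖τ‖ ε₂ with h | h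
      · exact le_trans (mul_le_mul_of_nonneg_right (min_le_left _ _) (sq_nonneg _))
          (hglocal τ h)
      · have hτD' : τ ∈ D' := ⟨hτD, h.le⟩
        have h1 : r 0 ^ 2 - r τ₀ ^ 2 ≤ r 0 ^ 2 - r τ ^ 2 := hτ₀min τ hτD'
        have h2 : ‖τ‖ ≤ MB' := le_trans (hMB τ hτD) (le_max_left _ _)
        have h3 : min (r 0 * (m / 8)) ((r 0 ^ 2 - r τ₀ ^ 2) / MB' ^ 2) * ‖τ‖ ^ 2
            ≤ ((r 0 ^ 2 - r τ₀ ^ 2) / MB' ^ 2) * MB' ^ 2 := by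
          apply mul_le_mul (min_le_right _ _) ?_ (sq_nonneg _) (by positivity)
          nlinarith [norm_nonneg τ]
        have h4 : ((r 0 ^ 2 - r τ₀ ^ 2) / MB' ^ 2) * MB' ^ 2 = r 0 ^ 2 - r τ₀ ^ 2 :=
          div_mul_cancel₀ _ (by positivity)
        linarith
  obtain ⟨C, hC, hCall⟩ := key
  exact ⟨C, hC, fun s hs t ht => hCall _ ⟨(s, t), ⟨hs, ht⟩, rfl⟩⟩
end
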